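/- Polynomial step count corollary: if a program p_φ is in ST (safe and terminating), then p_φ has a polynomial step count, i.e. there is a polynomial P such that for every store μ and oracle φ, the derivation π_φ : μ ⊨ p_φ → w satisfies |π_φ| ≤ P(m(μ,π_φ)). -/

import Mathlib

namespace BFFpaper

/-! ### Words -/

/-- Words over the alphabet `{0,1}` (`false` = 0, `true` = 1). -/
abbrev W : Type := List Bool

/-- `padTrunc v w` truncates `v` to its first `min |v| |w|` symbols and pads the
result with a word of the form `10^k` so that the result has length `|w| + 1`. -/
def padTrunc (v w : W) : W :=
  v.take w.length ++ true :: List.replicate (w.length - (v.take w.length).length) false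

/-- Maximum of a list of naturals (0 for the empty list). -/
def maxList (l : List ℕ) : ℕ := l.foldr max 0

/-- `lrAux m l` counts the positions of `l` whose value strictly exceeds the
maximum of `m` and all previous values. -/
def lrAux : ℕ → List ℕ → ℕ
  | _, [] => 0
  | m, a :: l => if m < a then lrAux (max m a) l + 1 else lrAux m l

/-- Number of "lookahead revisions" in a sequence of oracle inputs: the number of
indices whose entry is strictly longer than all previous entries. -/
def lrCount (l : List W) : ℕ := lrAux 0 (l.map List.length)

/-! ### Oracle Turing machines -/

/-- Tape symbols: `none` is the blank symbol. -/
abbrev Sym := Option Bool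

/-- A (half-abstract) two-way infinite tape with a head: left part (reversed) and
right part, the head scanning the first symbol of the right part. -/
abbrev HTape := List Sym × List Sym

def tRead (t : HTape) : Sym := t.2.headD none

def tWrite (t : HTape) (s : Sym) : HTape := (t.1, s :: t.2.tail)

inductive Move | L | R | N
deriving DecidableEq

def tMove (t : HTape) : Move → HTape
  | .L => (t.1.tail, t.1.headD none :: t.2)
  | .R => (t.2.headD none :: t.1, t.2.tail)
  | .N => t

def tAct (t : HTape) (a : Sym × Move) : HTape := tMove (tWrite t a.1) a.2

/-- The word written on a tape starting at the head (up to the first blank). -/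
def tWord (t : HTape) : W := (t.2.takeWhile fun s => s.isSome).filterMap id

def ofWord (w : W) : HTape := ([], w.map some)

/-- A deterministic oracle Turing machine with `k` (unary, word-valued) oracles,
an input tape, a query tape, an answer tape and a work tape.  The transition
function reads the state and the four scanned symbols and either halts (`none`)
or produces a new state, a write/move action for each tape and an optional
oracle index: if an oracle index `i` is produced, the machine poses the content
of the query tape as a query and the oracle answer `φ i q` appears on the answer
tape in this single step. -/
structure OTM (k : ℕ) where
  states : ℕ
  q₀ : Fin (states + 1)
  δ : Fin (states + 1) → Sym × Sym × Sym × Sym →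
      Option (Fin (states + 1) × (Sym × Move) × (Sym × Move) × (Sym × Move) × (Sym × Move) ×
        Option (Fin k))

/-- Configurations of an oracle Turing machine. -/
structure Cfg (k : ℕ) (M : OTM k) where
  q : Fin (M.states + 1)
  inp : HTape
  qry : HTape
  ans : HTape
  wrk : HTape

namespace OTM

variable {k : ℕ}

def reads (M : OTM k) (c : Cfg k M) : Sym × Sym × Sym × Sym :=
  (tRead c.inp, tRead c.qry, tRead c.ans, tRead c.wrk)

/-- One step of the machine (`none` when the machine halts). -/
def step (M : OTM k) (φ : Fin k → W → W) (c : Cfg k M) : Option (Cfg k M) :=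
  match M.δ c.q (M.reads c) with
  | none => none
  | some (q', ai, aq, aa, aw, oq) =>
    let qry' := tAct c.qry aq
    some { q := q', inp := tAct c.inp ai, qry := qry',
           ans := match oq with
                  | none => tAct c.ans aa
                  | some i => ofWord (φ i (tWord qry'))
           wrk := tAct c.wrk aw }

/-- Running the machine for `n` steps (`none` if the machine halts earlier). -/
def run (M : OTM k) (φ : Fin k → W → W) : ℕ → Cfg k M → Option (Cfg k M)
  | 0, c => some c
  | n + 1, c => (M.step φ c).bind (M.run φ n)

/-- The (oracle index, query word) posed by the present step, if it is a query step. -/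
def stepQuery (M : OTM k) (c : Cfg k M) : List (Fin k × W) :=
  match M.δ c.q (M.reads c) with
  | some (_, _, aq, _, _, some i) => [(i, tWord (tAct c.qry aq))]
  | _ => []

/-- The list of queries posed during the first `n` steps of the run from `c`,
in chronological order. -/
def queries (M : OTM k) (φ : Fin k → W → W) : ℕ → Cfg k M → List (Fin k × W)
  | 0, _ => []
  | n + 1, c =>
    M.stepQuery c ++ (match M.step φ c with
      | none => []
      | some c' => M.queries φ n c')

/-- Initial configuration on a list of input words (separated by blanks on the
input tape). -/
def init (M : OTM k) (a : List W) : Cfg k M :=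
  { q := M.q₀, inp := ([], List.intercalate [none] (a.map fun w => w.map some)),
    qry := ([], []), ans := ([], []), wrk := ([], []) }

/-- The machine, with oracles `φ`, halts after exactly `n` steps from `c₀` in
configuration `c'`. -/
def HaltsAt (M : OTM k) (φ : Fin k → W → W) (c₀ : Cfg k M) (n : ℕ) (c' : Cfg k M) : Prop :=
  M.run φ n c₀ = some c' ∧ M.step φ c' = none

/-- The machine computes the type-2 functional `F` (output read off the work tape). -/
def Computes {m : ℕ} (M : OTM k) (F : (Fin k → W → W) → (Fin m → W) → W) : Prop :=
  ∀ (φ : Fin k → W → W) (v : Fin m → W),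
    ∃ n c', M.HaltsAt φ (M.init (List.ofFn v)) n c' ∧ tWord c'.wrk = F φ v

/-- Polynomial step count: the running time is bounded by a (type-1) polynomial in
the maximum of the input size and the sizes of all oracle answers during the run. -/
def PolyStepCount (M : OTM k) : Prop :=
  ∃ P : Polynomial ℕ, ∀ (φ : Fin k → W → W) (a : List W) (n : ℕ) (c' : Cfg k M),
    M.HaltsAt φ (M.init a) n c' →
      n ≤ P.eval (max (maxList (a.map List.length))
        (maxList ((M.queries φ n (M.init a)).map fun iw => (φ iw.1 iw.2).length)))

/-- Finite lookahead revision: on any oracle and any input, it happens at most `r`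
times that a query is posed whose size exceeds the sizes of all previous queries. -/
def FiniteLookahead (M : OTM k) : Prop :=
  ∃ r : ℕ, ∀ (φ : Fin k → W → W) (a : List W) (n : ℕ),
    lrAux 0 ((M.queries φ n (M.init a)).map fun iw => iw.2.length) ≤ r

end OTM

/-! ### Second-order polynomials and the basic feasible functionals -/

/-- Second-order polynomials in `k` length-functions and `m` first-order variables. -/
inductive SOP (k m : ℕ)
  | var : Fin m → SOP k m
  | const : ℕ → SOP k m
  | add : SOP k m → SOP k m → SOP k m
  | mul : SOP k m → SOP k m → SOP k m
  | app : Fin k → SOP k m → SOP k m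

def SOP.eval {k m : ℕ} (L : Fin k → ℕ → ℕ) (v : Fin m → ℕ) : SOP k m → ℕ
  | .var i => v i
  | .const c => c
  | .add p q => p.eval L v + q.eval L v
  | .mul p q => p.eval L v * q.eval L v
  | .app i p => L i (p.eval L v)

/-- The length function `|φ|` of an oracle: `|φ|(n)` is the maximal size of `φ w`
over words `w` of length at most `n`. -/
noncomputable def lenFun (φ : W → W) (n : ℕ) : ℕ :=
  sSup ((fun w => (φ w).length) '' { w : W | w.length ≤ n })

/-- Kapron–Cook style basic feasible functionals with `k` oracles and `m` word
arguments: computable by an oracle Turing machine whose running time is bounded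
by a second-order polynomial in the lengths `|φᵢ|` of the oracles and the sizes of
the inputs. -/
def BFFkm (k m : ℕ) : Set ((Fin k → W → W) → (Fin m → W) → W) :=
  { F | ∃ M : OTM k, M.Computes F ∧ ∃ P : SOP k m,
      ∀ (φ : Fin k → W → W) (v : Fin m → W) (n : ℕ) (c' : Cfg k M),
        M.HaltsAt φ (M.init (List.ofFn v)) n c' →
          n ≤ P.eval (fun i => lenFun (φ i)) (fun j => (v j).length) }

/-- The class `FP` of `m`-ary polynomial time computable (type-1) functions. -/
def FPm (m : ℕ) : Set ((Fin m → W) → W) :=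
  { F | ∃ M : OTM 0, M.Computes (fun _ v => F v) ∧ ∃ P : SOP 0 m,
      ∀ (φ : Fin 0 → W → W) (v : Fin m → W) (n : ℕ) (c' : Cfg 0 M),
        M.HaltsAt φ (M.init (List.ofFn v)) n c' →
          n ≤ P.eval (fun i => i.elim0) (fun j => (v j).length) }

/-- Moderately polynomial time functionals with `m` word arguments: computable by
an oracle machine with polynomial step count and finite lookahead revision. -/
def MPTm (m : ℕ) : Set ((W → W) → (Fin m → W) → W) :=
  { F | ∃ M : OTM 1, M.Computes (fun φs v => F (φs 0) v) ∧
      M.PolyStepCount ∧ M.FiniteLookahead }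

/-- The class MPT of type-2 functionals `(W → W) → W → W`. -/
def MPT : Set ((W → W) → W → W) := { F | (fun φ v => F φ (v 0)) ∈ MPTm 1 }

/-! ### Simple types, lambda terms and lambda closures -/

/-- Simple types over the base type of words. -/
inductive Ty
  | base : Ty
  | arrow : Ty → Ty → Ty

/-- Set-theoretic interpretation of simple types. -/
def Ty.interp : Ty → Type
  | .base => W
  | .arrow a b => a.interp → b.interp

/-- Type level. -/
def Ty.lev : Ty → ℕ
  | .base => 0
  | .arrow a b => max (a.lev + 1) b.lev

/-- A class of functionals: a set of functionals at each simple type. -/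
abbrev FClass := ∀ τ : Ty, Set τ.interp

/-- Simply typed lambda terms with constants from the class `X`. -/
inductive Tm (X : FClass) : List Ty → Ty → Type
  | var : ∀ {Γ : List Ty} (i : Fin Γ.length), Tm X Γ (Γ.get i)
  | con : ∀ {Γ : List Ty} {τ : Ty} (f : τ.interp), f ∈ X τ → Tm X Γ τ
  | lam : ∀ {Γ : List Ty} {σ τ : Ty}, Tm X (σ :: Γ) τ → Tm X Γ (.arrow σ τ)
  | app : ∀ {Γ : List Ty} {σ τ : Ty}, Tm X Γ (.arrow σ τ) → Tm X Γ σ → Tm X Γ τ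

/-- Denotational semantics of lambda terms. -/
def Tm.denote {X : FClass} : ∀ {Γ : List Ty} {τ : Ty},
    Tm X Γ τ → ((i : Fin Γ.length) → (Γ.get i).interp) → τ.interp
  | _, _, .var i, env => env i
  | _, _, .con f _, _ => f
  | Γ, _, .lam (σ := σ) t, env => fun a =>
      t.denote (fun i => Fin.cases (motive := fun i => (((σ :: Γ).get i)).interp) a env i)
  | _, _, .app t s, env => (t.denote env) (s.denote env)

/-- The simply typed lambda closure `λ(X)` of a class of functionals. -/
def lambdaCl (X : FClass) : FClass := fun τ =>
  { f | ∃ t : Tm X [] τ, t.denote (fun i => i.elim0) = f }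

/-- Restriction of a class to functionals of type level 2. -/
def levelTwo (X : FClass) : FClass := fun τ => { f | τ.lev = 2 ∧ f ∈ X τ }

/-- `λ(X)₂`: the type-2 restriction of the simply typed lambda closure of `X`. -/
def lambdaTwo (X : FClass) : FClass := levelTwo (lambdaCl X)

/-- The simple type `W → ⋯ → W → W` with `m` word arguments. -/
def tyW1 : ℕ → Ty
  | 0 => .base
  | m + 1 => .arrow .base (tyW1 m)

/-- The simple type `(W → W) → ⋯ → (W → W) → W → ⋯ → W → W` with `k` oracle
arguments and `m` word arguments. -/
def tyKM : ℕ → ℕ → Ty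
  | 0, m => tyW1 m
  | k + 1, m => .arrow (.arrow .base .base) (tyKM k m)

def curryW : ∀ m : ℕ, ((Fin m → W) → W) → (tyW1 m).interp
  | 0, F => F Fin.elim0
  | m + 1, F => fun a => curryW m (fun v => F (Fin.cons a v))

def curryKM : ∀ k m : ℕ, ((Fin k → W → W) → (Fin m → W) → W) → (tyKM k m).interp
  | 0, m, F => curryW m (F Fin.elim0)
  | k + 1, m, F => fun φ => curryKM k m (fun φs => F (Fin.cons φ φs))

/-- The class of functionals (at all simple types) obtained from a family of
multi-ary functionals by currying. -/
def classKM (S : ∀ k m : ℕ, Set ((Fin k → W → W) → (Fin m → W) → W)) : FClass :=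
  fun _τ f => ∃ k m F, F ∈ S k m ∧ HEq f (curryKM k m F)

/-- The class `BFF₂` of type-2 basic feasible functionals, at all level-2 types. -/
def BFF2 : FClass := lambdaTwo (classKM BFFkm)

/-! ### The imperative language with oracles -/

/-- A signature: a set of operators with arities and total word semantics. -/
structure Sig where
  Op : Type
  ar : Op → ℕ
  sem : ∀ o : Op, (Fin (ar o) → W) → W

/-- Expressions. -/
inductive Expr (S : Sig)
  | var : ℕ → Expr S
  | op : (o : S.Op) → (Fin (S.ar o) → Expr S) → Expr S
  | orac : Expr S → Expr S → Expr S

/-- Commands. -/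
inductive Cmd (S : Sig)
  | skip : Cmd S
  | assign : ℕ → Expr S → Cmd S
  | seq : Cmd S → Cmd S → Cmd S
  | ite : Expr S → Cmd S → Cmd S → Cmd S
  | wh : Expr S → Cmd S → Cmd S

/-- Programs: a command together with a return variable. -/
structure Prog (S : Sig) where
  cmd : Cmd S
  ret : ℕ

variable {S : Sig}

/-- Evaluation of expressions (stores are total maps from variables to words). -/
def evalE (S : Sig) (φ : W → W) (μ : ℕ → W) : Expr S → W
  | .var x => μ x
  | .op o a => S.sem o (fun i => evalE S φ μ (a i))
  | .orac e₁ e₂ => φ (padTrunc (evalE S φ μ e₁) (evalE S φ μ e₂))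

/-- Size (number of nodes) of the evaluation derivation of an expression. -/
def sizeE : Expr S → ℕ
  | .var _ => 1
  | .op _ a => 1 + ∑ i, sizeE (a i)
  | .orac e₁ e₂ => 1 + sizeE e₁ + sizeE e₂

/-- The sequence of oracle input values occurring in the evaluation of an
expression, in left-to-right order. -/
def queriesE (S : Sig) (φ : W → W) (μ : ℕ → W) : Expr S → List W
  | .var _ => []
  | .op _ a => (List.ofFn fun i => queriesE S φ μ (a i)).flatten
  | .orac e₁ e₂ => queriesE S φ μ e₁ ++ queriesE S φ μ e₂ ++
      [padTrunc (evalE S φ μ e₁) (evalE S φ μ e₂)]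

/-- Big-step operational semantics of commands, instrumented with the size of
the derivation and the chronological list of oracle input values. -/
inductive EvalC (S : Sig) (φ : W → W) : Cmd S → (ℕ → W) → (ℕ → W) → ℕ → List W → Prop
  | skip {μ} : EvalC S φ .skip μ μ 1 []
  | assign {μ x e} :
      EvalC S φ (.assign x e) μ (Function.update μ x (evalE S φ μ e)) (sizeE e + 1)
        (queriesE S φ μ e)
  | seq {c₁ c₂ μ μ₁ μ₂ n₁ n₂ q₁ q₂} :
      EvalC S φ c₁ μ μ₁ n₁ q₁ → EvalC S φ c₂ μ₁ μ₂ n₂ q₂ →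
      EvalC S φ (.seq c₁ c₂) μ μ₂ (n₁ + n₂ + 1) (q₁ ++ q₂)
  | ifT {e c₁ c₀ μ μ' n q} :
      evalE S φ μ e = [true] → EvalC S φ c₁ μ μ' n q →
      EvalC S φ (.ite e c₁ c₀) μ μ' (sizeE e + n + 1) (queriesE S φ μ e ++ q)
  | ifF {e c₁ c₀ μ μ' n q} :
      evalE S φ μ e = [false] → EvalC S φ c₀ μ μ' n q →
      EvalC S φ (.ite e c₁ c₀) μ μ' (sizeE e + n + 1) (queriesE S φ μ e ++ q)
  | whF {e c μ} :
      evalE S φ μ e = [false] →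
      EvalC S φ (.wh e c) μ μ (sizeE e + 1) (queriesE S φ μ e)
  | whT {e c μ μ₁ μ₂ n₁ n₂ q₁ q₂} :
      evalE S φ μ e = [true] → EvalC S φ c μ μ₁ n₁ q₁ →
      EvalC S φ (.wh e c) μ₁ μ₂ n₂ q₂ →
      EvalC S φ (.wh e c) μ μ₂ (sizeE e + n₁ + n₂ + 1) (queriesE S φ μ e ++ q₁ ++ q₂)

/-! ### Syntactic notions -/

/-- Variables of an expression. -/
def varsE : Expr S → Finset ℕ
  | .var x => {x}
  | .op _ a => Finset.univ.biUnion fun i => varsE (a i)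
  | .orac e₁ e₂ => varsE e₁ ∪ varsE e₂

/-- Variables of a command. -/
def varsC : Cmd S → Finset ℕ
  | .skip => ∅
  | .assign x e => insert x (varsE e)
  | .seq c₁ c₂ => varsC c₁ ∪ varsC c₂
  | .ite e c₁ c₂ => varsE e ∪ varsC c₁ ∪ varsC c₂
  | .wh e c => varsE e ∪ varsC c

/-- Variables assigned to in a command. -/
def AssignedIn (x : ℕ) : Cmd S → Prop
  | .skip => False
  | .assign y _ => x = y
  | .seq c₁ c₂ => AssignedIn x c₁ ∨ AssignedIn x c₂
  | .ite _ c₁ c₂ => AssignedIn x c₁ ∨ AssignedIn x c₂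
  | .wh _ c => AssignedIn x c

/-- Subexpression occurrence. -/
inductive SubExpr : Expr S → Expr S → Prop
  | refl (e : Expr S) : SubExpr e e
  | op {e : Expr S} {o : S.Op} {a : Fin (S.ar o) → Expr S} (i : Fin (S.ar o)) :
      SubExpr e (a i) → SubExpr e (.op o a)
  | oracL {e e₁ e₂ : Expr S} : SubExpr e e₁ → SubExpr e (.orac e₁ e₂)
  | oracR {e e₁ e₂ : Expr S} : SubExpr e e₂ → SubExpr e (.orac e₁ e₂)

/-- Occurrence of an expression in a command. -/
inductive ExprInCmd : Expr S → Cmd S → Prop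
  | assign {e e' : Expr S} {x : ℕ} : SubExpr e e' → ExprInCmd e (.assign x e')
  | seqL {e c₁ c₂} : ExprInCmd e c₁ → ExprInCmd e (.seq c₁ c₂)
  | seqR {e c₁ c₂} : ExprInCmd e c₂ → ExprInCmd e (.seq c₁ c₂)
  | iteG {e e' c₁ c₂} : SubExpr e e' → ExprInCmd e (.ite e' c₁ c₂)
  | iteL {e e' c₁ c₂} : ExprInCmd e c₁ → ExprInCmd e (.ite e' c₁ c₂)
  | iteR {e e' c₁ c₂} : ExprInCmd e c₂ → ExprInCmd e (.ite e' c₁ c₂)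
  | whG {e e' c} : SubExpr e e' → ExprInCmd e (.wh e' c)
  | whB {e e' c} : ExprInCmd e c → ExprInCmd e (.wh e' c)

/-- Occurrence of a command in a command. -/
inductive CmdInCmd : Cmd S → Cmd S → Prop
  | refl (c : Cmd S) : CmdInCmd c c
  | seqL {c c₁ c₂} : CmdInCmd c c₁ → CmdInCmd c (.seq c₁ c₂)
  | seqR {c c₁ c₂} : CmdInCmd c c₂ → CmdInCmd c (.seq c₁ c₂)
  | iteL {c e c₁ c₂} : CmdInCmd c c₁ → CmdInCmd c (.ite e c₁ c₂)
  | iteR {c e c₁ c₂} : CmdInCmd c c₂ → CmdInCmd c (.ite e c₁ c₂)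
  | whB {c e c'} : CmdInCmd c c' → CmdInCmd c (.wh e c')

/-- All operators occurring in an expression are neutral (w.r.t. predicate `N`). -/
def OpsSat (N : S.Op → Prop) : Expr S → Prop
  | .var _ => True
  | .op o a => N o ∧ ∀ i, OpsSat N (a i)
  | .orac e₁ e₂ => OpsSat N e₁ ∧ OpsSat N e₂

/-- No oracle call occurs in the expression. -/
def OracleFreeE : Expr S → Prop
  | .var _ => True
  | .op _ a => ∀ i, OracleFreeE (a i)
  | .orac _ _ => False

/-- No oracle call occurs in the command. -/
def OracleFreeC : Cmd S → Prop
  | .skip => True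
  | .assign _ e => OracleFreeE e
  | .seq c₁ c₂ => OracleFreeC c₁ ∧ OracleFreeC c₂
  | .ite e c₁ c₂ => OracleFreeE e ∧ OracleFreeC c₁ ∧ OracleFreeC c₂
  | .wh e c => OracleFreeE e ∧ OracleFreeC c

/-! ### Neutral and positive operators, safe environments -/

/-- Neutral operators: constants, predicates, or operators computing a subword
of one of their arguments. -/
def Sig.Neutral (S : Sig) (o : S.Op) : Prop :=
  S.ar o = 0 ∨ (∀ v, S.sem o v = [false] ∨ S.sem o v = [true]) ∨
    (∀ v, ∃ i, S.sem o v <:+: v i)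

/-- Positive operators: the size of the output is bounded by the maximal size of
the arguments plus a constant. -/
def Sig.Positive (S : Sig) (o : S.Op) : Prop :=
  ∃ c : ℕ, ∀ v, (S.sem o v).length ≤ (Finset.univ.sup fun i => (v i).length) + c

/-- The semantics of the operator is polynomial time computable. -/
def Sig.PolyTimeOp (S : Sig) (o : S.Op) : Prop :=
  (fun v => S.sem o v) ∈ FPm (S.ar o)

/-- Operator typing environments: to each operator and each innermost tier, a set
of admissible operator types `t₁ → ⋯ → t_{ar op} → t`. -/
abbrev OpEnv (S : Sig) := ∀ o : S.Op, ℕ → Set ((Fin (S.ar o) → ℕ) × ℕ)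

/-- Safe operator typing environments. -/
def SafeDelta (S : Sig) (Δ : OpEnv S) : Prop :=
  ∀ (o : S.Op) (tin : ℕ) (tv : Fin (S.ar o) → ℕ) (t : ℕ), (tv, t) ∈ Δ o tin →
    (0 < S.ar o → (S.Neutral o ∨ S.Positive o) ∧ S.PolyTimeOp o) ∧
    (∀ i, t ≤ tv i) ∧ (∀ i, tv i ≤ tin) ∧ t ≤ tin ∧
    (S.Positive o ∧ ¬ S.Neutral o → t < tin)

/-! ### The tier-based type system -/

/-- Typing judgments for expressions: `TE S Γ Δ e t ti to`. -/
inductive TE (S : Sig) (Γ : ℕ → ℕ) (Δ : OpEnv S) : Expr S → ℕ → ℕ → ℕ → Prop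
  | var {x tin tout} : TE S Γ Δ (.var x) (Γ x) tin tout
  | op {o : S.Op} {a tv t tin tout} : (tv, t) ∈ Δ o tin →
      (∀ i, TE S Γ Δ (a i) (tv i) tin tout) → TE S Γ Δ (.op o a) t tin tout
  | orac {e₁ e₂ t tin tout} : TE S Γ Δ e₁ t tin tout → TE S Γ Δ e₂ tout tin tout →
      t < tin → t ≤ tout → TE S Γ Δ (.orac e₁ e₂) t tin tout

/-- Typing judgments for commands: `TC S Γ Δ c t ti to`. -/
inductive TC (S : Sig) (Γ : ℕ → ℕ) (Δ : OpEnv S) : Cmd S → ℕ → ℕ → ℕ → Prop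
  | sub {c t tin tout} : TC S Γ Δ c t tin tout → TC S Γ Δ c (t + 1) tin tout
  | skip {tin tout} : TC S Γ Δ .skip 0 tin tout
  | assign {x e t' tin tout} : TE S Γ Δ e t' tin tout → Γ x ≤ t' →
      TC S Γ Δ (.assign x e) (Γ x) tin tout
  | seq {c₁ c₂ t tin tout} : TC S Γ Δ c₁ t tin tout → TC S Γ Δ c₂ t tin tout →
      TC S Γ Δ (.seq c₁ c₂) t tin tout
  | ite {e c₁ c₂ t tin tout} : TE S Γ Δ e t tin tout → TC S Γ Δ c₁ t tin tout →
      TC S Γ Δ c₂ t tin tout → TC S Γ Δ (.ite e c₁ c₂) t tin tout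
  | whW {e c t tin tout} : TE S Γ Δ e t tin tout → TC S Γ Δ c t t tout →
      1 ≤ t → t ≤ tout → TC S Γ Δ (.wh e c) t tin tout
  | wh0 {e c t tin} : TE S Γ Δ e t tin t → TC S Γ Δ c t t t →
      1 ≤ t → TC S Γ Δ (.wh e c) t tin 0

/-! ### Typing derivations as trees -/

mutual
/-- Typing derivation trees for expressions. -/
inductive DE (S : Sig) (Γ : ℕ → ℕ) (Δ : OpEnv S) : Expr S → ℕ → ℕ → ℕ → Type
  | var (x tin tout : ℕ) : DE S Γ Δ (.var x) (Γ x) tin tout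
  | op {o : S.Op} {a tv t tin tout} : (tv, t) ∈ Δ o tin →
      (∀ i, DE S Γ Δ (a i) (tv i) tin tout) → DE S Γ Δ (.op o a) t tin tout
  | orac {e₁ e₂ t tin tout} : DE S Γ Δ e₁ t tin tout → DE S Γ Δ e₂ tout tin tout →
      t < tin → t ≤ tout → DE S Γ Δ (.orac e₁ e₂) t tin tout

/-- Typing derivation trees for commands. -/
inductive DC (S : Sig) (Γ : ℕ → ℕ) (Δ : OpEnv S) : Cmd S → ℕ → ℕ → ℕ → Type
  | sub {c t tin tout} : DC S Γ Δ c t tin tout → DC S Γ Δ c (t + 1) tin tout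
  | skip (tin tout : ℕ) : DC S Γ Δ .skip 0 tin tout
  | assign {x e t' tin tout} : DE S Γ Δ e t' tin tout → Γ x ≤ t' →
      DC S Γ Δ (.assign x e) (Γ x) tin tout
  | seq {c₁ c₂ t tin tout} : DC S Γ Δ c₁ t tin tout → DC S Γ Δ c₂ t tin tout →
      DC S Γ Δ (.seq c₁ c₂) t tin tout
  | ite {e c₁ c₂ t tin tout} : DE S Γ Δ e t tin tout → DC S Γ Δ c₁ t tin tout →
      DC S Γ Δ c₂ t tin tout → DC S Γ Δ (.ite e c₁ c₂) t tin tout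
  | whW {e c t tin tout} : DE S Γ Δ e t tin tout → DC S Γ Δ c t t tout →
      1 ≤ t → t ≤ tout → DC S Γ Δ (.wh e c) t tin tout
  | wh0 {e c t tin} : DE S Γ Δ e t tin t → DC S Γ Δ c t t t →
      1 ≤ t → DC S Γ Δ (.wh e c) t tin 0
end

/-- `SubC ρ ρ'`: the command typing derivation `ρ` is a subderivation (subtree) of
`ρ'`, i.e. `ρ ∈ D(ρ')`. -/
inductive SubC {S : Sig} {Γ : ℕ → ℕ} {Δ : OpEnv S} :
    ∀ {c₁ t₁ i₁ o₁ c₂ t₂ i₂ o₂}, DC S Γ Δ c₁ t₁ i₁ o₁ → DC S Γ Δ c₂ t₂ i₂ o₂ → Prop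
  | refl {c t tin tout} (ρ : DC S Γ Δ c t tin tout) : SubC ρ ρ
  | sub {c₁ t₁ i₁ o₁ c t tin tout} {ρ : DC S Γ Δ c₁ t₁ i₁ o₁} {ρ' : DC S Γ Δ c t tin tout} :
      SubC ρ ρ' → SubC ρ (DC.sub ρ')
  | seqL {c₁ t₁ i₁ o₁ ca cb t tin tout} {ρ : DC S Γ Δ c₁ t₁ i₁ o₁}
      {ρa : DC S Γ Δ ca t tin tout} {ρb : DC S Γ Δ cb t tin tout} :
      SubC ρ ρa → SubC ρ (DC.seq ρa ρb)
  | seqR {c₁ t₁ i₁ o₁ ca cb t tin tout} {ρ : DC S Γ Δ c₁ t₁ i₁ o₁}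
      {ρa : DC S Γ Δ ca t tin tout} {ρb : DC S Γ Δ cb t tin tout} :
      SubC ρ ρb → SubC ρ (DC.seq ρa ρb)
  | iteL {c₁ t₁ i₁ o₁ e ca cb t tin tout} {ρ : DC S Γ Δ c₁ t₁ i₁ o₁}
      {ρe : DE S Γ Δ e t tin tout} {ρa : DC S Γ Δ ca t tin tout} {ρb : DC S Γ Δ cb t tin tout} :
      SubC ρ ρa → SubC ρ (DC.ite ρe ρa ρb)
  | iteR {c₁ t₁ i₁ o₁ e ca cb t tin tout} {ρ : DC S Γ Δ c₁ t₁ i₁ o₁}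
      {ρe : DE S Γ Δ e t tin tout} {ρa : DC S Γ Δ ca t tin tout} {ρb : DC S Γ Δ cb t tin tout} :
      SubC ρ ρa → SubC ρ (DC.ite ρe ρb ρa)
  | whW {c₁ t₁ i₁ o₁ e c t tin tout} {ρ : DC S Γ Δ c₁ t₁ i₁ o₁}
      {ρe : DE S Γ Δ e t tin tout} {ρc : DC S Γ Δ c t t tout} {h₁ : 1 ≤ t} {h₂ : t ≤ tout} :
      SubC ρ ρc → SubC ρ (DC.whW ρe ρc h₁ h₂)
  | wh0 {c₁ t₁ i₁ o₁ e c t tin} {ρ : DC S Γ Δ c₁ t₁ i₁ o₁}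
      {ρe : DE S Γ Δ e t tin t} {ρc : DC S Γ Δ c t t t} {h₁ : 1 ≤ t} :
      SubC ρ ρc → SubC ρ (DC.wh0 ρe ρc h₁)

/-- `SSubC ρ ρ'`: `ρ` is a *strict* subderivation of `ρ'`, i.e. `ρ ∈ D̊(ρ')`. -/
inductive SSubC {S : Sig} {Γ : ℕ → ℕ} {Δ : OpEnv S} :
    ∀ {c₁ t₁ i₁ o₁ c₂ t₂ i₂ o₂}, DC S Γ Δ c₁ t₁ i₁ o₁ → DC S Γ Δ c₂ t₂ i₂ o₂ → Prop
  | sub {c₁ t₁ i₁ o₁ c t tin tout} {ρ : DC S Γ Δ c₁ t₁ i₁ o₁} {ρ' : DC S Γ Δ c t tin tout} :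
      SubC ρ ρ' → SSubC ρ (DC.sub ρ')
  | seqL {c₁ t₁ i₁ o₁ ca cb t tin tout} {ρ : DC S Γ Δ c₁ t₁ i₁ o₁}
      {ρa : DC S Γ Δ ca t tin tout} {ρb : DC S Γ Δ cb t tin tout} :
      SubC ρ ρa → SSubC ρ (DC.seq ρa ρb)
  | seqR {c₁ t₁ i₁ o₁ ca cb t tin tout} {ρ : DC S Γ Δ c₁ t₁ i₁ o₁}
      {ρa : DC S Γ Δ ca t tin tout} {ρb : DC S Γ Δ cb t tin tout} :
      SubC ρ ρb → SSubC ρ (DC.seq ρa ρb)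
  | iteL {c₁ t₁ i₁ o₁ e ca cb t tin tout} {ρ : DC S Γ Δ c₁ t₁ i₁ o₁}
      {ρe : DE S Γ Δ e t tin tout} {ρa : DC S Γ Δ ca t tin tout} {ρb : DC S Γ Δ cb t tin tout} :
      SubC ρ ρa → SSubC ρ (DC.ite ρe ρa ρb)
  | iteR {c₁ t₁ i₁ o₁ e ca cb t tin tout} {ρ : DC S Γ Δ c₁ t₁ i₁ o₁}
      {ρe : DE S Γ Δ e t tin tout} {ρa : DC S Γ Δ ca t tin tout} {ρb : DC S Γ Δ cb t tin tout} :
      SubC ρ ρa → SSubC ρ (DC.ite ρe ρb ρa)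
  | whW {c₁ t₁ i₁ o₁ e c t tin tout} {ρ : DC S Γ Δ c₁ t₁ i₁ o₁}
      {ρe : DE S Γ Δ e t tin tout} {ρc : DC S Γ Δ c t t tout} {h₁ : 1 ≤ t} {h₂ : t ≤ tout} :
      SubC ρ ρc → SSubC ρ (DC.whW ρe ρc h₁ h₂)
  | wh0 {c₁ t₁ i₁ o₁ e c t tin} {ρ : DC S Γ Δ c₁ t₁ i₁ o₁}
      {ρe : DE S Γ Δ e t tin t} {ρc : DC S Γ Δ c t t t} {h₁ : 1 ≤ t} :
      SubC ρ ρc → SSubC ρ (DC.wh0 ρe ρc h₁)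

/-- The last rule of a command typing derivation is (W) or (W₀). -/
def DC.lastWhileIntro {S : Sig} {Γ : ℕ → ℕ} {Δ : OpEnv S} :
    ∀ {c t tin tout}, DC S Γ Δ c t tin tout → Prop
  | _, _, _, _, .whW _ _ _ _ => True
  | _, _, _, _, .wh0 _ _ _ => True
  | _, _, _, _, _ => False

/-! ### Safe programs, ST and the computed functionals -/

/-- A program is safe with respect to `Γ` and a safe `Δ` when its command is typable. -/
def SafeProg (S : Sig) (Γ : ℕ → ℕ) (Δ : OpEnv S) (p : Prog S) : Prop :=
  SafeDelta S Δ ∧ ∃ t tin tout, TC S Γ Δ p.cmd t tin tout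

def Prog.vars (p : Prog S) : Finset ℕ := varsC p.cmd ∪ {p.ret}

def Prog.varList (p : Prog S) : List ℕ := p.vars.sort (· ≤ ·)

/-- The number of input arguments of a program: one for each of its variables. -/
def Prog.arity (p : Prog S) : ℕ := p.varList.length

/-- The initial store associated with input values `v` (all other variables are ε). -/
def Prog.initStore (p : Prog S) (v : Fin p.arity → W) : ℕ → W := fun x =>
  if h : x ∈ p.varList then v ⟨p.varList.idxOf x, List.idxOf_lt_length_iff.mpr h⟩ else []

/-- `p.EvalP φ v w` : on oracle `φ` and inputs `v`, the program `p` terminates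
with result `w`. -/
def Prog.EvalP (p : Prog S) (φ : W → W) (v : Fin p.arity → W) (w : W) : Prop :=
  ∃ μ' n q, EvalC S φ p.cmd (p.initStore v) μ' n q ∧ w = μ' p.ret

/-- Termination on all oracles and inputs. -/
def Prog.Terminating (p : Prog S) : Prop := ∀ φ v, ∃ w, p.EvalP φ v w

open Classical in
/-- The (second-order) function computed by the program. -/
noncomputable def Prog.fn (p : Prog S) (φ : W → W) (v : Fin p.arity → W) : W :=
  if h : ∃ w, p.EvalP φ v w then h.choose else []

/-- `ST`: the safe and terminating programs. -/
def STset (S : Sig) : Set (Prog S) :=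
  { p | (∃ Γ Δ, SafeProg S Γ Δ p) ∧ p.Terminating }

/-- The `n`-ary type-2 functionals computed by programs in `ST`. -/
def STsemN (S : Sig) (n : ℕ) : Set ((W → W) → (Fin n → W) → W) :=
  { F | ∃ p ∈ STset S, ∃ h : p.arity = n,
      ∀ φ v, F φ v = p.fn φ (fun i => v (Fin.cast h i)) }

/-- `⟦ST⟧` as a family indexed by numbers of oracles and word arguments. -/
def STfam (S : Sig) : ∀ k m : ℕ, Set ((Fin k → W → W) → (Fin m → W) → W) :=
  fun k m F => k = 1 ∧ (fun φ v => F (fun _ => φ) v) ∈ STsemN S m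

/-- The type-1 functions computed by oracle-free programs of `ST`. -/
def STsem1 (S : Sig) (m : ℕ) : Set ((Fin m → W) → W) :=
  { F | ∃ p ∈ STset S, OracleFreeC p.cmd ∧ ∃ h : p.arity = m,
      ∀ v, F v = p.fn (fun _ => []) (fun i => v (Fin.cast h i)) }

/-- Programs in `ST` typable using only tiers `⪯ t` for the program variables. -/
def STtSet (S : Sig) (t : ℕ) : Set (Prog S) :=
  { p | (∃ Γ Δ, SafeDelta S Δ ∧ (∀ x ∈ p.vars, Γ x ≤ t) ∧
       ∃ t' tin tout, TC S Γ Δ p.cmd t' tin tout) ∧ p.Terminating }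

def STtFam (S : Sig) (t : ℕ) : ∀ k m : ℕ, Set ((Fin k → W → W) → (Fin m → W) → W) :=
  fun k m F => k = 1 ∧
    ∃ p ∈ STtSet S t, ∃ h : p.arity = m,
      ∀ φ v, F (fun _ => φ) v = p.fn φ (fun i => v (Fin.cast h i))

/-! ### Runtime measures -/

/-- Size of a store, restricted to the variables of the program. -/
def storeSize (p : Prog S) (μ : ℕ → W) : ℕ := ∑ x ∈ p.vars, (μ x).length

/-- `mval p φ μ q`: the maximum of the size of the store and of the sizes of all
oracle answers in the derivation (whose oracle inputs are `q`). -/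
def mval (p : Prog S) (φ : W → W) (μ : ℕ → W) (q : List W) : ℕ :=
  max (storeSize p μ) (maxList (q.map fun v => (φ v).length))

/-- Polynomial step count for programs. -/
def Prog.PolyStepCount (p : Prog S) : Prop :=
  ∃ P : Polynomial ℕ, ∀ (φ : W → W) (μ μ' : ℕ → W) (n : ℕ) (q : List W),
    EvalC S φ p.cmd μ μ' n q → n ≤ P.eval (mval p φ μ q)

/-- Finite lookahead revision for programs. -/
def Prog.FiniteLookahead (p : Prog S) : Prop :=
  ∃ r : ℕ, ∀ (φ : W → W) (μ μ' : ℕ → W) (n : ℕ) (q : List W),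
    EvalC S φ p.cmd μ μ' n q → lrCount q ≤ r

/-- Store equivalence at tier `t`: stores agree on all variables of tier `⪰ t`. -/
def storeEquiv (Γ : ℕ → ℕ) (t : ℕ) (μ₁ μ₂ : ℕ → W) : Prop :=
  ∀ x, t ≤ Γ x → μ₁ x = μ₂ x

/-! ### The full signature (all neutral/positive operators available) -/

/-- The signature containing every total word function as an operator. -/
def SigAll : Sig := ⟨(m : ℕ) × ((Fin m → W) → W), Sigma.fst, fun o => o.snd⟩

/-! ### Padded oracles -/

/-- Strip the `10^n` padding from a word: `stripPad (w ++ 1 ++ 0^n) = w`. -/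
def stripPad (v : W) : W := ((v.reverse.dropWhile fun b => !b).tail).reverse

/-- The padded version `φ̃` of an oracle `φ` : it satisfies `φ̃ (w10ⁿ) = φ w`. -/
def tildeOracle (φ : W → W) : W → W := fun v => φ (stripPad v)



/-! ### Auxiliary development for the polynomial step count theorem -/

section PSC

/-! #### maxList lemmas -/

theorem maxList_cons (a : ℕ) (l : List ℕ) : maxList (a :: l) = max a (maxList l) := rfl

theorem le_maxList {a : ℕ} {l : List ℕ} (h : a ∈ l) : a ≤ maxList l := by
  induction l with
  | nil => cases h
  | cons b l ih =>
    rcases List.mem_cons.1 h with h | h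
    · simp [maxList_cons, h]
    · exact le_trans (ih h) (by simp [maxList_cons])

theorem maxList_le {l : List ℕ} {b : ℕ} (h : ∀ a ∈ l, a ≤ b) : maxList l ≤ b := by
  induction l with
  | nil => exact Nat.zero_le b
  | cons a l ih =>
    simp only [maxList_cons, max_le_iff]
    exact ⟨h a (by simp), ih fun x hx => h x (by simp [hx])⟩

/-- Maximal oracle answer length over a list of queries. -/
def ansL (φ : W → W) (q : List W) : ℕ := maxList (q.map fun v => (φ v).length)

theorem ansL_mem {φ : W → W} {q : List W} {v : W} (h : v ∈ q) : (φ v).length ≤ ansL φ q :=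
  le_maxList (List.mem_map.2 ⟨v, h, rfl⟩)

theorem ansL_mono {φ : W → W} {q q' : List W} (h : ∀ v ∈ q, v ∈ q') : ansL φ q ≤ ansL φ q' := by
  refine maxList_le ?_
  intro a ha
  rcases List.mem_map.1 ha with ⟨v, hv, rfl⟩
  exact ansL_mem (h v hv)

theorem ansL_append_left {φ : W → W} (q q' : List W) : ansL φ q ≤ ansL φ (q ++ q') :=
  ansL_mono fun v hv => List.mem_append.2 (Or.inl hv)

theorem ansL_append_right {φ : W → W} (q q' : List W) : ansL φ q' ≤ ansL φ (q ++ q') :=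
  ansL_mono fun v hv => List.mem_append.2 (Or.inr hv)

/-! #### Tiered store measure -/

/-- Maximal length of the value of a variable of tier at least `s` among `X`. -/
def Vtier (Γ : ℕ → ℕ) (s : ℕ) (X : Finset ℕ) (μ : ℕ → W) : ℕ :=
  X.sup fun x => if s ≤ Γ x then (μ x).length else 0

theorem Vtier_le {Γ s X μ b} (h : ∀ x ∈ X, s ≤ Γ x → (μ x).length ≤ b) :
    Vtier Γ s X μ ≤ b := by
  refine Finset.sup_le fun x hx => ?_
  by_cases hs : s ≤ Γ x
  · simpa [hs] using h x hx hs
  · simp [hs]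

theorem le_Vtier {Γ s X μ x} (hx : x ∈ X) (hs : s ≤ Γ x) : (μ x).length ≤ Vtier Γ s X μ := by
  have := Finset.le_sup (f := fun x => if s ≤ Γ x then (μ x).length else 0) hx
  simpa [hs, Vtier] using this

theorem Vtier_mono_set {Γ s X Y μ} (h : X ⊆ Y) : Vtier Γ s X μ ≤ Vtier Γ s Y μ :=
  Finset.sup_mono h

theorem Vtier_anti {Γ s s' X μ} (h : s ≤ s') : Vtier Γ s' X μ ≤ Vtier Γ s X μ :=
  Vtier_le fun x hx hs => le_Vtier hx (le_trans h hs)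

theorem Vtier_update_le {Γ s X μ x v} :
    Vtier Γ s X (Function.update μ x v) ≤ max (Vtier Γ s X μ) v.length := by
  refine Vtier_le fun y hy hs => ?_
  by_cases hxy : y = x
  · subst hxy; simp [Function.update_self]
  · rw [Function.update_of_ne hxy]
    exact le_trans (le_Vtier hy hs) (le_max_left _ _)

theorem Vtier_congr {Γ s X} {μ μ' : ℕ → W} (h : ∀ x ∈ X, μ x = μ' x) :
    Vtier Γ s X μ = Vtier Γ s X μ' := by
  unfold Vtier
  exact Finset.sup_congr rfl fun x hx => by rw [h x hx]

/-! #### Arithmetic for polynomial bounds of the shape `C * (M+1)^k` -/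

theorem pb_pos (C k M : ℕ) : 1 ≤ (M + 1) ^ k := Nat.one_le_pow _ _ (Nat.succ_pos M)

theorem pb_mono {M M' : ℕ} (C k : ℕ) (h : M ≤ M') : C * (M + 1) ^ k ≤ C * (M' + 1) ^ k :=
  Nat.mul_le_mul_left _ (Nat.pow_le_pow_left (by omega) _)

theorem pb_mono_CK {C C' k k' M : ℕ} (hC : C ≤ C') (hk : k ≤ k') :
    C * (M + 1) ^ k ≤ C' * (M + 1) ^ k' :=
  Nat.mul_le_mul hC (Nat.pow_le_pow_right (by omega) hk)

theorem pb_compose {a C1 k1 C2 k2 M : ℕ} (h : a ≤ C1 * (M + 1) ^ k1) :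
    C2 * (a + 1) ^ k2 ≤ (C2 * (C1 + 1) ^ k2) * (M + 1) ^ (k1 * k2) := by
  have h1 : a + 1 ≤ (C1 + 1) * (M + 1) ^ k1 := by
    have := pb_pos C1 k1 M
    calc a + 1 ≤ C1 * (M + 1) ^ k1 + 1 := by omega
    _ ≤ C1 * (M + 1) ^ k1 + (M + 1) ^ k1 := by omega
    _ = (C1 + 1) * (M + 1) ^ k1 := by ring
  calc C2 * (a + 1) ^ k2 ≤ C2 * ((C1 + 1) * (M + 1) ^ k1) ^ k2 :=
        Nat.mul_le_mul_left _ (Nat.pow_le_pow_left h1 _)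
  _ = (C2 * (C1 + 1) ^ k2) * (M + 1) ^ (k1 * k2) := by rw [mul_pow, ← pow_mul]; ring

theorem pb_add {a b C1 k1 C2 k2 M : ℕ} (ha : a ≤ C1 * (M + 1) ^ k1)
    (hb : b ≤ C2 * (M + 1) ^ k2) : a + b ≤ (C1 + C2) * (M + 1) ^ (max k1 k2) := by
  have h1 : C1 * (M + 1) ^ k1 ≤ C1 * (M + 1) ^ (max k1 k2) :=
    pb_mono_CK le_rfl (le_max_left _ _)
  have h2 : C2 * (M + 1) ^ k2 ≤ C2 * (M + 1) ^ (max k1 k2) :=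
    pb_mono_CK le_rfl (le_max_right _ _)
  have : (C1 + C2) * (M + 1) ^ (max k1 k2) =
      C1 * (M + 1) ^ (max k1 k2) + C2 * (M + 1) ^ (max k1 k2) := by ring
  omega

theorem pb_mul {a b C1 k1 C2 k2 M : ℕ} (ha : a ≤ C1 * (M + 1) ^ k1)
    (hb : b ≤ C2 * (M + 1) ^ k2) : a * b ≤ (C1 * C2) * (M + 1) ^ (k1 + k2) := by
  calc a * b ≤ (C1 * (M + 1) ^ k1) * (C2 * (M + 1) ^ k2) := Nat.mul_le_mul ha hb
  _ = (C1 * C2) * (M + 1) ^ (k1 + k2) := by rw [pow_add]; ring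

theorem pb_const {a M : ℕ} : a ≤ a * (M + 1) ^ 0 := by simp

/-- Turn an additive bound `a ≤ M + C*(M+1)^k` into a multiplicative one. -/
theorem pb_absorb {a C k M : ℕ} (h : a ≤ M + C * (M + 1) ^ k) :
    a ≤ (C + 1) * (M + 1) ^ (k + 1) := by
  have h1 : M + 1 ≤ (M + 1) ^ (k + 1) := by
    calc M + 1 = (M + 1) ^ 1 := (pow_one _).symm
    _ ≤ (M + 1) ^ (k + 1) := Nat.pow_le_pow_right (by omega) (by omega)
  have h2 : C * (M + 1) ^ k ≤ C * (M + 1) ^ (k + 1) := pb_mono_CK le_rfl (by omega)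
  have : (C + 1) * (M + 1) ^ (k + 1) = C * (M + 1) ^ (k + 1) + (M + 1) ^ (k + 1) := by ring
  omega

/-! #### Infixes of a word as a finset -/

/-- The finset of infixes (contiguous subwords) of a word. -/
def infixesF (w : W) : Finset W := (w.tails.flatMap List.inits).toFinset

theorem mem_infixesF {u w : W} : u ∈ infixesF w ↔ u <:+: w := by
  simp only [infixesF, List.mem_toFinset, List.mem_flatMap, List.mem_tails, List.mem_inits]
  constructor
  · rintro ⟨t, ht, hu⟩
    exact hu.isInfix.trans ht.isInfix
  · intro h
    rcases List.infix_iff_prefix_suffix.1 h with ⟨t, h1, h2⟩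
    exact ⟨t, h2, h1⟩

theorem card_infixesF_le (w : W) : (infixesF w).card ≤ (w.length + 1) * (w.length + 1) := by
  classical
  calc (infixesF w).card ≤ (w.tails.flatMap List.inits).length := List.toFinset_card_le _
  _ ≤ (w.length + 1) * (w.length + 1) := by
      rw [List.length_flatMap]
      have hlen : ∀ t ∈ w.tails, (List.inits t).length ≤ w.length + 1 := by
        intro t ht
        have : t.length ≤ w.length := (List.mem_tails _ _ |>.1 ht).length_le
        simp only [List.length_inits]
        omega
      calc ((w.tails.map fun t => (List.inits t).length)).sum
          ≤ ((w.tails.map fun _ => w.length + 1)).sum := by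
            apply List.sum_le_sum hlen
      _ = w.tails.length * (w.length + 1) := by
            rw [List.map_const']; simp [List.sum_replicate, Nat.smul_one_eq_cast]
      _ = (w.length + 1) * (w.length + 1) := by rw [List.length_tails]

/-! #### Words of bounded length as a finset -/

/-- All words of length at most `B`. -/
def allW : ℕ → Finset W
  | 0 => {[]}
  | B + 1 => allW B ∪ (allW B).biUnion fun w => {true :: w, false :: w}

theorem mem_allW {B : ℕ} {w : W} : w ∈ allW B ↔ w.length ≤ B := by
  induction B generalizing w with
  | zero => cases w <;> simp [allW]
  | succ B ih =>
    simp only [allW, Finset.mem_union, Finset.mem_biUnion]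
    constructor
    · rintro (h | ⟨v, hv, h⟩)
      · exact le_trans (ih.1 h) (by omega)
      · rcases Finset.mem_insert.1 h with rfl | h
        · have := ih.1 hv; simp; omega
        · rcases Finset.mem_singleton.1 h with rfl
          have := ih.1 hv; simp; omega
    · intro h
      cases w with
      | nil => exact Or.inl (ih.2 (by simp))
      | cons b v =>
        right
        refine ⟨v, ih.2 (by simp at h; omega), ?_⟩
        cases b <;> simp


section NI

variable {S : Sig} {Γ : ℕ → ℕ} {Δ : OpEnv S}

theorem storeEquiv_mono {t t' : ℕ} {μ₁ μ₂ : ℕ → W} (h : t ≤ t')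
    (he : storeEquiv Γ t μ₁ μ₂) : storeEquiv Γ t' μ₁ μ₂ :=
  fun x hx => he x (le_trans h hx)

/-- (L1) The value of an expression of tier `t` only depends on variables of tier `⪰ t`. -/
theorem evalE_equiv (hS : SafeDelta S Δ) {e : Expr S} {t tin tout : ℕ}
    (h : TE S Γ Δ e t tin tout) :
    ∀ {φ : W → W} {μ₁ μ₂ : ℕ → W}, storeEquiv Γ t μ₁ μ₂ →
      evalE S φ μ₁ e = evalE S φ μ₂ e := by
  induction h with
  | var => intro φ μ₁ μ₂ he; exact he _ le_rfl
  | op hmem ha ih =>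
    intro φ μ₁ μ₂ he
    show S.sem _ _ = S.sem _ _
    congr 1
    funext i
    exact ih i (storeEquiv_mono ((hS _ _ _ _ hmem).2.1 i) he)
  | orac h1 h2 hlt hle ih1 ih2 =>
    intro φ μ₁ μ₂ he
    show (φ (padTrunc _ _) : W) = φ (padTrunc _ _)
    rw [ih1 he, ih2 (storeEquiv_mono hle he)]

/-- Variables not occurring in a command are unchanged by its evaluation. -/
theorem eval_unchanged {φ : W → W} {c : Cmd S} {μ μ' : ℕ → W} {n : ℕ} {q : List W}
    (h : EvalC S φ c μ μ' n q) {x : ℕ} (hx : x ∉ varsC c) : μ' x = μ x := by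
  induction h with
  | skip => rfl
  | assign =>
    have : x ∉ varsC (Cmd.assign _ _) := hx
    simp only [varsC, Finset.mem_insert, not_or] at this
    exact Function.update_of_ne this.1 _ _
  | seq h1 h2 ih1 ih2 =>
    simp only [varsC, Finset.mem_union, not_or] at hx
    rw [ih2 hx.2, ih1 hx.1]
  | ifT hg hb ih =>
    simp only [varsC, Finset.mem_union, not_or] at hx
    exact ih hx.1.2
  | ifF hg hb ih =>
    simp only [varsC, Finset.mem_union, not_or] at hx
    exact ih hx.2
  | whF hg => rfl
  | whT hg h1 h2 ih1 ih2 =>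
    simp only [varsC, Finset.mem_union, not_or] at hx
    rw [ih2 (by simp only [varsC, Finset.mem_union, not_or]; exact hx), ih1 hx.2]

/-! #### Inversion lemmas for command typing -/

theorem TC_assign_inv {x : ℕ} {e : Expr S} {t tin tout : ℕ}
    (h : TC S Γ Δ (.assign x e) t tin tout) :
    ∃ te, TE S Γ Δ e te tin tout ∧ Γ x ≤ te ∧ Γ x ≤ t := by
  generalize hc : Cmd.assign x e = c0 at h
  induction h with
  | sub h ih =>
    obtain ⟨te, h1, h2, h3⟩ := ih hc
    exact ⟨te, h1, h2, by omega⟩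
  | assign h1 h2 => cases hc; exact ⟨_, h1, h2, le_rfl⟩
  | skip => cases hc
  | seq _ _ _ _ => cases hc
  | ite _ _ _ _ _ => cases hc
  | whW _ _ _ _ => cases hc
  | wh0 _ _ _ => cases hc

theorem TC_seq_inv {c₁ c₂ : Cmd S} {t tin tout : ℕ}
    (h : TC S Γ Δ (.seq c₁ c₂) t tin tout) :
    ∃ t', t' ≤ t ∧ TC S Γ Δ c₁ t' tin tout ∧ TC S Γ Δ c₂ t' tin tout := by
  generalize hc : Cmd.seq c₁ c₂ = c0 at h
  induction h with
  | sub h ih =>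
    obtain ⟨t', h1, h2, h3⟩ := ih hc
    exact ⟨t', by omega, h2, h3⟩
  | seq h1 h2 _ _ => cases hc; exact ⟨_, le_rfl, h1, h2⟩
  | skip => cases hc
  | assign _ _ => cases hc
  | ite _ _ _ _ _ => cases hc
  | whW _ _ _ _ => cases hc
  | wh0 _ _ _ => cases hc

theorem TC_ite_inv {e : Expr S} {c₁ c₂ : Cmd S} {t tin tout : ℕ}
    (h : TC S Γ Δ (.ite e c₁ c₂) t tin tout) :
    ∃ t', t' ≤ t ∧ TE S Γ Δ e t' tin tout ∧ TC S Γ Δ c₁ t' tin tout ∧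
      TC S Γ Δ c₂ t' tin tout ∧ TC S Γ Δ (.ite e c₁ c₂) t' tin tout := by
  generalize hc : Cmd.ite e c₁ c₂ = c0 at h
  induction h with
  | sub h ih =>
    obtain ⟨t', h1, h2, h3, h4, h5⟩ := ih hc
    exact ⟨t', by omega, h2, h3, h4, h5⟩
  | ite h1 h2 h3 _ _ => cases hc; exact ⟨_, le_rfl, h1, h2, h3, TC.ite h1 h2 h3⟩
  | skip => cases hc
  | assign _ _ => cases hc
  | seq _ _ _ _ => cases hc
  | whW _ _ _ _ => cases hc
  | wh0 _ _ _ => cases hc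

theorem TC_wh_inv {e : Expr S} {c : Cmd S} {t tin tout : ℕ}
    (h : TC S Γ Δ (.wh e c) t tin tout) :
    ∃ t' tout', t' ≤ t ∧ 1 ≤ t' ∧ TE S Γ Δ e t' tin tout' ∧ TC S Γ Δ c t' t' tout' ∧
      TC S Γ Δ (.wh e c) t' tin tout := by
  generalize hc : Cmd.wh e c = c0 at h
  induction h with
  | sub h ih =>
    obtain ⟨t', tout', h1, h2, h3, h4, h5⟩ := ih hc
    exact ⟨t', tout', by omega, h2, h3, h4, h5⟩
  | whW h1 h2 h3 h4 => cases hc; exact ⟨_, _, le_rfl, h3, h1, h2, TC.whW h1 h2 h3 h4⟩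
  | wh0 h1 h2 h3 => cases hc; exact ⟨_, _, le_rfl, h3, h1, h2, TC.wh0 h1 h2 h3⟩
  | skip => cases hc
  | assign _ _ => cases hc
  | seq _ _ _ _ => cases hc
  | ite _ _ _ _ _ => cases hc

/-- (L2) A command typed with tier `t` only writes variables of tier `⪯ t`. -/
theorem writes_le {φ : W → W} {c : Cmd S} {μ μ' : ℕ → W} {n : ℕ} {q : List W}
    (h : EvalC S φ c μ μ' n q) :
    ∀ {t tin tout : ℕ}, TC S Γ Δ c t tin tout → ∀ x, t < Γ x → μ' x = μ x := by
  induction h with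
  | skip => intros; rfl
  | assign =>
    intro t tin tout ht x hx
    obtain ⟨te, _, _, h3⟩ := TC_assign_inv ht
    refine Function.update_of_ne ?_ _ _
    rintro rfl; omega
  | seq h1 h2 ih1 ih2 =>
    intro t tin tout ht x hx
    obtain ⟨t', ht', hc1, hc2⟩ := TC_seq_inv ht
    rw [ih2 hc2 x (by omega), ih1 hc1 x (by omega)]
  | ifT hg hb ih =>
    intro t tin tout ht x hx
    obtain ⟨t', ht', _, hc1, hc2, _⟩ := TC_ite_inv ht
    exact ih hc1 x (by omega)
  | ifF hg hb ih =>
    intro t tin tout ht x hx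
    obtain ⟨t', ht', _, hc1, hc2, _⟩ := TC_ite_inv ht
    exact ih hc2 x (by omega)
  | whF hg => intros; rfl
  | whT hg h1 h2 ih1 ih2 =>
    intro t tin tout ht x hx
    obtain ⟨t', tout', ht', _, _, hc, hw⟩ := TC_wh_inv ht
    rw [ih2 hw x (by omega), ih1 hc x (by omega)]

/-- (L3) Noninterference: evaluations from stores agreeing at tiers `⪰ s`
yield stores agreeing at tiers `⪰ s`. -/
theorem noninterf (hS : SafeDelta S Δ) (φ : W → W) (s : ℕ) :
    ∀ na : ℕ, ∀ {c : Cmd S} {t tin tout : ℕ} {μa μa' μb μb' : ℕ → W} {qa nb qb},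
      TC S Γ Δ c t tin tout → EvalC S φ c μa μa' na qa → EvalC S φ c μb μb' nb qb →
      storeEquiv Γ s μa μb → storeEquiv Γ s μa' μb' := by
  intro na
  induction na using Nat.strong_induction_on with
  | _ na IH =>
  intro c t tin tout μa μa' μb μb' qa nb qb ht ha hb he
  cases ha with
  | skip => cases hb; exact he
  | @assign _ x e =>
    cases hb
    obtain ⟨te, hte, hxe, _⟩ := TC_assign_inv ht
    intro z hz
    by_cases hzx : z = x
    · subst hzx
      simp only [Function.update_self]
      rw [evalE_equiv hS hte (storeEquiv_mono (t := s) (t' := te) (by omega) he)]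
    · rw [Function.update_of_ne hzx, Function.update_of_ne hzx]
      exact he z hz
  | @seq c₁ c₂ _ _ _ n1 n2 _ _ ha1 ha2 =>
    cases hb with
    | seq hb1 hb2 =>
      obtain ⟨t', ht', hc1, hc2⟩ := TC_seq_inv ht
      exact IH n2 (by omega) hc2 ha2 hb2 (IH n1 (by omega) hc1 ha1 hb1 he)
  | @ifT e c₁ c₀ _ _ n _ hg hab =>
    obtain ⟨t', hle, hte, htc1, htc2, htI⟩ := TC_ite_inv ht
    by_cases hts : t' < s
    · intro z hz
      rw [writes_le hab htc1 z (by omega), writes_le hb htI z (by omega)]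
      exact he z hz
    · have hguard := evalE_equiv (φ := φ) hS hte (storeEquiv_mono (by omega) he)
      cases hb with
      | ifT hg' hb' => exact IH n (by omega) htc1 hab hb' he
      | ifF hg' hb' => rw [hguard, hg'] at hg; simp at hg
  | @ifF e c₁ c₀ _ _ n _ hg hab =>
    obtain ⟨t', hle, hte, htc1, htc2, htI⟩ := TC_ite_inv ht
    by_cases hts : t' < s
    · intro z hz
      rw [writes_le hab htc2 z (by omega), writes_le hb htI z (by omega)]
      exact he z hz
    · have hguard := evalE_equiv (φ := φ) hS hte (storeEquiv_mono (by omega) he)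
      cases hb with
      | ifF hg' hb' => exact IH n (by omega) htc2 hab hb' he
      | ifT hg' hb' => rw [hguard, hg'] at hg; simp at hg
  | @whF e c _ hg =>
    obtain ⟨t', tout', hle, h1t, hte, htc, htw⟩ := TC_wh_inv ht
    by_cases hts : t' < s
    · intro z hz
      rw [writes_le hb htw z (by omega)]
      exact he z hz
    · have hguard := evalE_equiv (φ := φ) hS hte (storeEquiv_mono (by omega) he)
      cases hb with
      | whF hg' => exact he
      | whT hg' _ _ => rw [hguard, hg'] at hg; simp at hg
  | @whT e c _ _ _ n1 n2 _ _ hg hbody hrest =>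
    obtain ⟨t', tout', hle, h1t, hte, htc, htw⟩ := TC_wh_inv ht
    by_cases hts : t' < s
    · have ha' : EvalC S φ (.wh e c) _ _ _ _ := EvalC.whT hg hbody hrest
      intro z hz
      rw [writes_le ha' htw z (by omega), writes_le hb htw z (by omega)]
      exact he z hz
    · have hguard := evalE_equiv (φ := φ) hS hte (storeEquiv_mono (by omega) he)
      cases hb with
      | whF hg' => rw [hguard, hg'] at hg; simp at hg
      | whT hg' hbody' hrest' =>
        exact IH n2 (by omega) htw hrest hrest'
          (IH n1 (by omega) htc hbody hbody' he)

end NI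

section VAL

variable {S : Sig} {Γ : ℕ → ℕ} {Δ : OpEnv S}

theorem sem_ar0 {o : S.Op} (h : S.ar o = 0) (v v' : Fin (S.ar o) → W) :
    S.sem o v = S.sem o v' := by
  congr 1
  funext i
  exact (Fin.cast h i).elim0

/-- (L4E) Values of expressions of tier `⪰ tin` are of bounded size or infixes of
high-tier variables. -/
theorem highValue (hS : SafeDelta S Δ) {e : Expr S} {t tin tout : ℕ}
    (h : TE S Γ Δ e t tin tout) :
    tin ≤ t → ∃ K : ℕ, ∀ (φ : W → W) (μ : ℕ → W),
      (evalE S φ μ e).length ≤ K ∨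
      ∃ y ∈ varsE e, t ≤ Γ y ∧ evalE S φ μ e <:+: μ y := by
  induction h with
  | @var x tin tout =>
    intro _
    exact ⟨0, fun φ μ => Or.inr ⟨x, by simp [varsE], le_rfl, List.infix_refl _⟩⟩
  | @op o a tv t tin tout hmem ha ih =>
    intro htin
    obtain ⟨hop, hle1, hle2, hlein, hpos⟩ := hS o tin tv t hmem
    by_cases har : S.ar o = 0
    · refine ⟨(S.sem o fun _ => ([] : W)).length, fun φ μ => Or.inl ?_⟩
      show (S.sem o fun i => evalE S φ μ (a i)).length ≤ _
      rw [sem_ar0 har _ (fun _ => ([] : W))]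
    · have hNP := hop (by omega)
      have hneu : S.Neutral o := by
        by_contra hn
        rcases hNP.1 with h' | h'
        · exact hn h'
        · have := hpos ⟨h', hn⟩; omega
      rcases hneu with har0 | hbool | hsub
      · exact absurd har0 har
      · refine ⟨1, fun φ μ => Or.inl ?_⟩
        rcases hbool (fun i => evalE S φ μ (a i)) with h' | h' <;>
          · show (S.sem o fun i => evalE S φ μ (a i)).length ≤ 1
            rw [h']; simp
      · have hch : ∀ i, ∃ K : ℕ, ∀ (φ : W → W) (μ : ℕ → W),
            (evalE S φ μ (a i)).length ≤ K ∨
            ∃ y ∈ varsE (a i), tv i ≤ Γ y ∧ evalE S φ μ (a i) <:+: μ y :=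
          fun i => ih i (le_trans htin (hle1 i))
        choose Ks hKs using hch
        refine ⟨Finset.univ.sup Ks, fun φ μ => ?_⟩
        obtain ⟨i, hi⟩ := hsub (fun i => evalE S φ μ (a i))
        rcases hKs i φ μ with h' | ⟨y, hy, hty, hinf⟩
        · exact Or.inl (le_trans hi.length_le
            (le_trans h' (Finset.le_sup (Finset.mem_univ i))))
        · refine Or.inr ⟨y, ?_, le_trans (hle1 i) hty, hi.trans hinf⟩
          exact Finset.mem_biUnion.2 ⟨i, Finset.mem_univ i, hy⟩
  | @orac e₁ e₂ t tin tout h1 h2 hlt hle ih1 ih2 =>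
    intro htin
    omega

/-- (L8') The length of the value of an expression of tier `t` is bounded by the
maximal length of the variables of tier `⪰ s` (`s ⪯ t`) plus oracle answers plus
a constant. -/
theorem lenBound (hS : SafeDelta S Δ) {e : Expr S} {t tin tout : ℕ}
    (h : TE S Γ Δ e t tin tout) :
    ∃ K : ℕ, ∀ s ≤ t, ∀ (φ : W → W) (μ : ℕ → W),
      (evalE S φ μ e).length ≤
        max (Vtier Γ s (varsE e) μ) (ansL φ (queriesE S φ μ e)) + K := by
  induction h with
  | @var x tin tout =>
    refine ⟨0, fun s hs φ μ => ?_⟩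
    have h1 : (μ x).length ≤ Vtier Γ s (varsE (S := S) (.var x)) μ :=
      le_Vtier (by simp [varsE]) hs
    have h2 : evalE S φ μ (Expr.var x) = μ x := rfl
    rw [h2]
    omega
  | @op o a tv t tin tout hmem ha ih =>
    by_cases har : S.ar o = 0
    · refine ⟨(S.sem o fun _ => ([] : W)).length, fun s hs φ μ => ?_⟩
      show (S.sem o fun i => evalE S φ μ (a i)).length ≤ _
      rw [sem_ar0 har _ (fun _ => ([] : W))]
      omega
    · obtain ⟨hop, hle1, hle2, hlein, hpos⟩ := hS o tin tv t hmem
      have hgrow : ∃ cst : ℕ, ∀ v : Fin (S.ar o) → W,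
          (S.sem o v).length ≤ (Finset.univ.sup fun i => (v i).length) + cst := by
        rcases (hop (by omega)).1 with hneu | hposi
        · rcases hneu with har0 | hbool | hsub
          · exact absurd har0 har
          · refine ⟨1, fun v => ?_⟩
            rcases hbool v with h' | h' <;> · rw [h']; simp
          · refine ⟨0, fun v => ?_⟩
            obtain ⟨i, hi⟩ := hsub v
            simpa using le_trans hi.length_le
              (Finset.le_sup (f := fun i => (v i).length) (Finset.mem_univ i))
        · obtain ⟨cst, hcst⟩ := hposi
          exact ⟨cst, hcst⟩
      obtain ⟨cst, hcst⟩ := hgrow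
      choose Ks hKs using ih
      refine ⟨Finset.univ.sup Ks + cst, fun s hs φ μ => ?_⟩
      show (S.sem o fun i => evalE S φ μ (a i)).length ≤ _
      refine le_trans (hcst _) ?_
      have hchild : ∀ i, (evalE S φ μ (a i)).length ≤
          max (Vtier Γ s (varsE (Expr.op o a)) μ)
            (ansL φ (queriesE S φ μ (Expr.op o a))) + Finset.univ.sup Ks := by
        intro i
        refine le_trans (hKs i s (le_trans hs (hle1 i)) φ μ) ?_
        have hv : Vtier Γ s (varsE (a i)) μ ≤ Vtier Γ s (varsE (Expr.op o a)) μ :=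
          Vtier_mono_set (by
            intro y hy
            exact Finset.mem_biUnion.2 ⟨i, Finset.mem_univ i, hy⟩)
        have hq : ansL φ (queriesE S φ μ (a i)) ≤
            ansL φ (queriesE S φ μ (Expr.op o a)) := by
          refine ansL_mono fun v hv => ?_
          show v ∈ (List.ofFn fun i => queriesE S φ μ (a i)).flatten
          exact List.mem_flatten.2 ⟨queriesE S φ μ (a i),
            by rw [List.mem_ofFn]; exact ⟨i, rfl⟩, hv⟩
        have := Finset.le_sup (f := Ks) (Finset.mem_univ i)
        omega
      have : (Finset.univ.sup fun i => (evalE S φ μ (a i)).length) ≤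
          max (Vtier Γ s (varsE (Expr.op o a)) μ)
            (ansL φ (queriesE S φ μ (Expr.op o a))) + Finset.univ.sup Ks :=
        Finset.sup_le fun i _ => hchild i
      omega
  | @orac e₁ e₂ t tin tout h1 h2 hlt hle ih1 ih2 =>
    refine ⟨0, fun s hs φ μ => ?_⟩
    show (φ (padTrunc (evalE S φ μ e₁) (evalE S φ μ e₂))).length ≤ _
    have : padTrunc (evalE S φ μ e₁) (evalE S φ μ e₂) ∈
        queriesE S φ μ (Expr.orac e₁ e₂) := by
      show _ ∈ _ ++ _ ++ [_]
      simp
    have := ansL_mem (φ := φ) this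
    omega

end VAL

section LOOP

variable {S : Sig} {Γ : ℕ → ℕ} {Δ : OpEnv S}

/-- Decomposition of the evaluation of a while loop into its iterations. -/
theorem loop_decomp {φ : W → W} {e : Expr S} {c : Cmd S} :
    ∀ (n : ℕ) (μ μ' : ℕ → W) (q : List W), EvalC S φ (.wh e c) μ μ' n q →
    ∃ (N : ℕ) (f : ℕ → ℕ → W) (nb : ℕ → ℕ) (qb : ℕ → List W),
      f 0 = μ ∧ f N = μ' ∧
      (∀ i < N, evalE S φ (f i) e = [true] ∧
        EvalC S φ c (f i) (f (i+1)) (nb i) (qb i) ∧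
        ansL φ (qb i) ≤ ansL φ q ∧ nb i ≤ n) ∧
      evalE S φ (f N) e = [false] ∧ N ≤ n ∧
      n = (∑ i ∈ Finset.range N, (sizeE e + nb i + 1)) + (sizeE e + 1) := by
  intro n
  induction n using Nat.strong_induction_on with
  | _ n IH =>
  intro μ μ' q h
  cases h with
  | whF hg =>
    exact ⟨0, fun _ => μ, fun _ => 0, fun _ => [], rfl, rfl,
      fun i hi => absurd hi (by omega), hg, by omega, by simp⟩
  | @whT _ _ _ μ₁ _ n₁ n₂ q₁ q₂ hg hbody hrest =>
    obtain ⟨N, f, nb, qb, hf0, hfN, hstep, hgN, hNn, hsum⟩ :=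
      IH n₂ (by omega) μ₁ μ' q₂ hrest
    refine ⟨N + 1, fun i => if i = 0 then μ else f (i - 1),
      fun i => if i = 0 then n₁ else nb (i - 1),
      fun i => if i = 0 then q₁ else qb (i - 1), by simp, by simp [hfN], ?_, ?_, ?_, ?_⟩
    · intro i hi
      match i with
      | 0 =>
        refine ⟨by simpa using hg, ?_, ?_, by simp; omega⟩
        · simpa [hf0] using hbody
        · refine ansL_mono fun v hv => ?_
          simp only [if_true, reduceIte] at hv
          simp [hv]
      | j + 1 =>
        obtain ⟨h1, h2, h3, h4⟩ := hstep j (by omega)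
        refine ⟨by simpa using h1, by simpa using h2, ?_, ?_⟩
        · simp only [Nat.add_sub_cancel, if_neg (Nat.succ_ne_zero j)]
          exact le_trans h3 (ansL_append_right _ _)
        · simp only [Nat.add_sub_cancel, if_neg (Nat.succ_ne_zero j)]
          omega
    · simpa using hgN
    · omega
    · rw [Finset.sum_range_succ'
        (fun i => sizeE e + (if i = 0 then n₁ else nb (i - 1)) + 1) N]
      have hcg : ∀ i ∈ Finset.range N,
          sizeE e + (if i + 1 = 0 then n₁ else nb (i + 1 - 1)) + 1
            = sizeE e + nb i + 1 := by
        intro i _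
        simp
      rw [Finset.sum_congr rfl hcg]
      simp only [if_true, reduceIte]
      omega

end LOOP

section PB

/-- A function of polynomial growth. -/
def PolyBound (F : ℕ → ℕ) : Prop := ∃ C k : ℕ, ∀ M, F M ≤ C * (M + 1) ^ k

theorem PolyBound.const (a : ℕ) : PolyBound fun _ => a :=
  ⟨a, 0, fun M => by simp⟩

theorem PolyBound.id : PolyBound fun M => M := ⟨1, 1, fun M => by simpa using Nat.le_succ M⟩

theorem PolyBound.add {F G : ℕ → ℕ} (hF : PolyBound F) (hG : PolyBound G) :
    PolyBound fun M => F M + G M := by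
  obtain ⟨C1, k1, h1⟩ := hF
  obtain ⟨C2, k2, h2⟩ := hG
  exact ⟨C1 + C2, max k1 k2, fun M => pb_add (h1 M) (h2 M)⟩

theorem PolyBound.mul {F G : ℕ → ℕ} (hF : PolyBound F) (hG : PolyBound G) :
    PolyBound fun M => F M * G M := by
  obtain ⟨C1, k1, h1⟩ := hF
  obtain ⟨C2, k2, h2⟩ := hG
  exact ⟨C1 * C2, k1 + k2, fun M => pb_mul (h1 M) (h2 M)⟩

theorem PolyBound.comp {F G : ℕ → ℕ} (hF : PolyBound F) (hG : PolyBound G) :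
    PolyBound fun M => F (G M) := by
  obtain ⟨C1, k1, h1⟩ := hF
  obtain ⟨C2, k2, h2⟩ := hG
  refine ⟨C1 * (C2 + 1) ^ k1, k2 * k1, fun M => ?_⟩
  exact le_trans (h1 (G M)) (pb_compose (h2 M))

theorem PolyBound.pow {F : ℕ → ℕ} (hF : PolyBound F) (j : ℕ) :
    PolyBound fun M => F M ^ j := by
  induction j with
  | zero => exact ⟨1, 0, fun M => by simp⟩
  | succ j ih => simpa [pow_succ] using PolyBound.mul ih hF

theorem PolyBound.succ {F : ℕ → ℕ} (hF : PolyBound F) : PolyBound fun M => F M + 1 :=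
  hF.add (PolyBound.const 1)

end PB

section MP

variable {S : Sig} (Γ : ℕ → ℕ) {Δ : OpEnv S}

/-- Main invariant (i): polynomial bound on the size of the derivation. -/
def MPi (c : Cmd S) : Prop :=
  ∃ F : ℕ → ℕ, Monotone F ∧ PolyBound F ∧
    ∀ (φ : W → W) (μ μ' : ℕ → W) (n : ℕ) (q : List W), EvalC S φ c μ μ' n q →
      n ≤ F (max (Vtier Γ 1 (varsC c) μ) (ansL φ q))

/-- Main invariant (ii): values of variables of high tier are small or infixes
of initial values of higher-tier variables. -/
def MPii (c : Cmd S) (τ : ℕ) : Prop :=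
  ∃ B : ℕ, ∀ (φ : W → W) (μ μ' : ℕ → W) (n : ℕ) (q : List W), EvalC S φ c μ μ' n q →
    ∀ x, τ ≤ Γ x → (μ' x).length ≤ B ∨ μ' x = μ x ∨
      ∃ y ∈ varsC c, Γ x ≤ Γ y ∧ μ' x <:+: μ y

/-- Main invariant (iii): per-tier growth of the store is additively bounded by a
polynomial in the sizes of the strictly higher tiers. -/
def MPiii (c : Cmd S) : Prop :=
  ∃ F : ℕ → ℕ, Monotone F ∧ PolyBound F ∧
    ∀ (φ : W → W) (μ μ' : ℕ → W) (n : ℕ) (q : List W), EvalC S φ c μ μ' n q →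
      ∀ s : ℕ, Vtier Γ s (varsC c) μ' ≤
        max (Vtier Γ s (varsC c) μ) (ansL φ q) +
          F (max (Vtier Γ (s + 1) (varsC c) μ) (ansL φ q))

variable {Γ}

theorem MPii_mono {c : Cmd S} {τ τ' : ℕ} (h : τ ≤ τ') (hm : MPii Γ c τ) : MPii Γ c τ' := by
  obtain ⟨B, hB⟩ := hm
  exact ⟨B, fun φ μ μ' n q he x hx => hB φ μ μ' n q he x (le_trans h hx)⟩

/-- Lifting a tier measure along a sub-evaluation. -/
theorem Vtier_eval_lift {φ : W → W} {c' : Cmd S} {μ μ' : ℕ → W} {n : ℕ} {q : List W}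
    (h : EvalC S φ c' μ μ' n q) {X : Finset ℕ} (hsub : varsC c' ⊆ X) (s : ℕ) :
    Vtier Γ s X μ' ≤ max (Vtier Γ s (varsC c') μ') (Vtier Γ s X μ) := by
  refine Vtier_le fun x hx hs => ?_
  by_cases hm : x ∈ varsC c'
  · exact le_trans (le_Vtier hm hs) (le_max_left _ _)
  · rw [eval_unchanged h hm]
    exact le_trans (le_Vtier hx hs) (le_max_right _ _)

theorem Vtier_update_le' {s : ℕ} {X : Finset ℕ} {μ : ℕ → W} {x : ℕ} {v : W} :
    Vtier Γ s X (Function.update μ x v) ≤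
      max (Vtier Γ s X μ) (if s ≤ Γ x then v.length else 0) := by
  refine Vtier_le fun y hy hs => ?_
  by_cases hxy : y = x
  · subst hxy; simp [Function.update_self, hs]
  · rw [Function.update_of_ne hxy]
    exact le_trans (le_Vtier hy hs) (le_max_left _ _)

end MP

section MAINCASES

variable {S : Sig} {Γ : ℕ → ℕ} {Δ : OpEnv S}

theorem MP_skip : MPi Γ (Cmd.skip : Cmd S) ∧ MPii Γ (Cmd.skip : Cmd S) 0 ∧
    MPiii Γ (Cmd.skip : Cmd S) := by
  refine ⟨⟨fun _ => 1, monotone_const, PolyBound.const 1, ?_⟩,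
    ⟨0, ?_⟩, ⟨fun _ => 0, monotone_const, PolyBound.const 0, ?_⟩⟩
  · intro φ μ μ' n q h; cases h; exact le_rfl
  · intro φ μ μ' n q h x hx; cases h; exact Or.inr (Or.inl rfl)
  · intro φ μ μ' n q h s; cases h; simp

theorem MP_assign (hS : SafeDelta S Δ) {x : ℕ} {e : Expr S} {te tin tout : ℕ}
    (he : TE S Γ Δ e te tin tout) (hxe : Γ x ≤ te) :
    MPi Γ (Cmd.assign x e) ∧ MPii Γ (Cmd.assign x e) (max tin (Γ x)) ∧
      MPiii Γ (Cmd.assign x e) := by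
  obtain ⟨K, hK⟩ := lenBound hS he
  refine ⟨⟨fun _ => sizeE e + 1, monotone_const, PolyBound.const _, ?_⟩, ?_, ?_⟩
  · intro φ μ μ' n q h; cases h; exact le_rfl
  · by_cases htin : tin ≤ te
    · obtain ⟨B, hB⟩ := highValue hS he htin
      refine ⟨B, ?_⟩
      intro φ μ μ' n q h z hz
      cases h
      by_cases hzx : z = x
      · subst hzx
        simp only [Function.update_self]
        rcases hB φ μ with h' | ⟨y, hy, hty, hinf⟩
        · exact Or.inl h'
        · exact Or.inr (Or.inr ⟨y, by simp [varsC, hy], le_trans hxe hty, hinf⟩)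
      · rw [Function.update_of_ne hzx]
        exact Or.inr (Or.inl rfl)
    · refine ⟨0, ?_⟩
      intro φ μ μ' n q h z hz
      cases h
      by_cases hzx : z = x
      · subst hzx; omega
      · rw [Function.update_of_ne hzx]
        exact Or.inr (Or.inl rfl)
  · refine ⟨fun _ => K, monotone_const, PolyBound.const K, ?_⟩
    intro φ μ μ' n q h s
    cases h
    refine le_trans Vtier_update_le' ?_
    by_cases hsx : s ≤ Γ x
    · simp only [if_pos hsx]
      have h1 := hK s (by omega) φ μ
      have h2 : Vtier Γ s (varsE e) μ ≤ Vtier Γ s (varsC (Cmd.assign x e)) μ :=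
        Vtier_mono_set (by intro y hy; simp [varsC, hy])
      have h3 : ansL φ (queriesE S φ μ e) ≤ ansL φ (queriesE S φ μ e) := le_rfl
      have h4 : Vtier Γ s (varsC (Cmd.assign x e)) μ ≤
          max (Vtier Γ s (varsC (Cmd.assign x e)) μ) (ansL φ (queriesE S φ μ e)) :=
        le_max_left _ _
      omega
    · simp only [if_neg hsx]
      omega

theorem MP_seq {c₁ c₂ : Cmd S}
    (I1 : MPi Γ c₁) (I2 : MPii Γ c₁ τ) (I3 : MPiii Γ c₁)
    (J1 : MPi Γ c₂) (J2 : MPii Γ c₂ τ) (J3 : MPiii Γ c₂) :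
    MPi Γ (Cmd.seq c₁ c₂) ∧ MPii Γ (Cmd.seq c₁ c₂) τ ∧ MPiii Γ (Cmd.seq c₁ c₂) := by
  obtain ⟨F1, mF1, pF1, hF1⟩ := I1
  obtain ⟨B1, hB1⟩ := I2
  obtain ⟨G1, mG1, pG1, hG1⟩ := I3
  obtain ⟨F2, mF2, pF2, hF2⟩ := J1
  obtain ⟨B2, hB2⟩ := J2
  obtain ⟨G2, mG2, pG2, hG2⟩ := J3
  have hsub1 : varsC c₁ ⊆ varsC (Cmd.seq c₁ c₂) := by
    intro y hy; simp [varsC, hy]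
  have hsub2 : varsC c₂ ⊆ varsC (Cmd.seq c₁ c₂) := by
    intro y hy; simp [varsC, hy]
  refine ⟨⟨fun M => F1 M + F2 (M + G1 M) + 1, ?_, ?_, ?_⟩, ⟨max B1 B2, ?_⟩,
    ⟨fun M => G1 M + G2 (M + G1 M), ?_, ?_, ?_⟩⟩
  · exact Monotone.add (Monotone.add mF1 (mF2.comp (monotone_id.add mG1))) monotone_const
  · exact (pF1.add (pF2.comp (PolyBound.id.add pG1))).succ
  · intro φ μ μ' n q h
    cases h with
    | @seq _ _ _ μ₁ _ n₁ n₂ q₁ q₂ h1 h2 =>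
      set X := varsC (Cmd.seq c₁ c₂) with hX
      set M := max (Vtier Γ 1 X μ) (ansL φ (q₁ ++ q₂)) with hM
      have e1 : max (Vtier Γ 1 (varsC c₁) μ) (ansL φ q₁) ≤ M :=
        max_le_max (Vtier_mono_set hsub1) (ansL_append_left _ _)
      have hn1 : n₁ ≤ F1 M := le_trans (hF1 φ μ μ₁ n₁ q₁ h1) (mF1 e1)
      have hV : Vtier Γ 1 X μ₁ ≤ M + G1 M := by
        refine le_trans (Vtier_eval_lift h1 hsub1 1) ?_
        have := hG1 φ μ μ₁ n₁ q₁ h1 1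
        have e2 : max (Vtier Γ 1 (varsC c₁) μ) (ansL φ q₁) ≤ M := e1
        have e3 : max (Vtier Γ 2 (varsC c₁) μ) (ansL φ q₁) ≤ M :=
          max_le_max (le_trans (Vtier_anti (by omega)) (Vtier_mono_set hsub1))
            (ansL_append_left _ _)
        have := le_trans this (add_le_add e2 (mG1 e3))
        have h4 : Vtier Γ 1 X μ ≤ M := le_max_left _ _
        omega
      have hn2 : n₂ ≤ F2 (M + G1 M) := by
        refine le_trans (hF2 φ μ₁ μ' n₂ q₂ h2) (mF2 ?_)
        have h5 : ansL φ q₂ ≤ M := le_trans (ansL_append_right _ _) (le_max_right _ _)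
        have h6 : Vtier Γ 1 (varsC c₂) μ₁ ≤ Vtier Γ 1 X μ₁ := Vtier_mono_set hsub2
        have := hV
        simp only [max_le_iff]
        omega
      beta_reduce
      omega
  · intro φ μ μ' n q h z hz
    cases h with
    | @seq _ _ _ μ₁ _ n₁ n₂ q₁ q₂ h1 h2 =>
      rcases hB2 φ μ₁ μ' n₂ q₂ h2 z hz with h' | h' | ⟨y, hy, hty, hinf⟩
      · exact Or.inl (by omega)
      · rw [h']
        rcases hB1 φ μ μ₁ n₁ q₁ h1 z hz with h'' | h'' | ⟨y, hy, hty, hinf⟩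
        · exact Or.inl (by omega)
        · exact Or.inr (Or.inl h'')
        · exact Or.inr (Or.inr ⟨y, hsub1 hy, hty, hinf⟩)
      · rcases hB1 φ μ μ₁ n₁ q₁ h1 y (le_trans hz hty) with h'' | h'' | ⟨y', hy', hty', hinf'⟩
        · exact Or.inl (le_trans hinf.length_le (by omega))
        · exact Or.inr (Or.inr ⟨y, hsub2 hy, hty, h'' ▸ hinf⟩)
        · exact Or.inr (Or.inr ⟨y', hsub1 hy', le_trans hty hty', hinf.trans hinf'⟩)
  · exact Monotone.add mG1 (mG2.comp (monotone_id.add mG1))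
  · exact pG1.add (pG2.comp (PolyBound.id.add pG1))
  · intro φ μ μ' n q h s
    cases h with
    | @seq _ _ _ μ₁ _ n₁ n₂ q₁ q₂ h1 h2 =>
      set X := varsC (Cmd.seq c₁ c₂) with hX
      set A := ansL φ (q₁ ++ q₂) with hA
      set m := max (Vtier Γ (s + 1) X μ) A with hm
      have hA1 : ansL φ q₁ ≤ A := ansL_append_left _ _
      have hA2 : ansL φ q₂ ≤ A := ansL_append_right _ _
      -- growth of X-measure along c₁ at any level s'
      have key1 : ∀ s', Vtier Γ s' X μ₁ ≤
          max (Vtier Γ s' X μ) A + G1 (max (Vtier Γ (s' + 1) X μ) A) := by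
        intro s'
        refine le_trans (Vtier_eval_lift h1 hsub1 s') ?_
        have h3 := hG1 φ μ μ₁ n₁ q₁ h1 s'
        have e2 : max (Vtier Γ s' (varsC c₁) μ) (ansL φ q₁) ≤ max (Vtier Γ s' X μ) A :=
          max_le_max (Vtier_mono_set hsub1) hA1
        have e3 : max (Vtier Γ (s' + 1) (varsC c₁) μ) (ansL φ q₁) ≤
            max (Vtier Γ (s' + 1) X μ) A :=
          max_le_max (Vtier_mono_set hsub1) hA1
        have h4 := le_trans h3 (add_le_add e2 (mG1 e3))
        have h5 : Vtier Γ s' X μ ≤ max (Vtier Γ s' X μ) A := le_max_left _ _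
        omega
      have key2 : Vtier Γ s X μ' ≤
          max (Vtier Γ s X μ₁) A + G2 (max (Vtier Γ (s + 1) X μ₁) A) := by
        refine le_trans (Vtier_eval_lift h2 hsub2 s) ?_
        have h3 := hG2 φ μ₁ μ' n₂ q₂ h2 s
        have e2 : max (Vtier Γ s (varsC c₂) μ₁) (ansL φ q₂) ≤ max (Vtier Γ s X μ₁) A :=
          max_le_max (Vtier_mono_set hsub2) hA2
        have e3 : max (Vtier Γ (s + 1) (varsC c₂) μ₁) (ansL φ q₂) ≤
            max (Vtier Γ (s + 1) X μ₁) A :=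
          max_le_max (Vtier_mono_set hsub2) hA2
        have h4 := le_trans h3 (add_le_add e2 (mG2 e3))
        have h5 : Vtier Γ s X μ₁ ≤ max (Vtier Γ s X μ₁) A := le_max_left _ _
        omega
      have k1s := key1 s
      have k1s' := key1 (s + 1)
      rw [← hm] at k1s k1s'
      have t2 : G1 (max (Vtier Γ (s + 1 + 1) X μ) A) ≤ G1 m :=
        mG1 (le_trans (max_le_max (Vtier_anti (by omega)) le_rfl) hm.ge)
      have t4 : A ≤ m := le_trans (le_max_right _ _) hm.ge
      have e4 : max (Vtier Γ (s + 1) X μ₁) A ≤ m + G1 m := by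
        simp only [max_le_iff]
        omega
      have e5 : max (Vtier Γ s X μ₁) A ≤ max (Vtier Γ s X μ) A + G1 m := by
        have t5 : A ≤ max (Vtier Γ s X μ) A := le_max_right _ _
        simp only [max_le_iff]
        omega
      have := le_trans key2 (add_le_add e5 (mG2 e4))
      beta_reduce
      omega

theorem MP_ite (hS : SafeDelta S Δ) {e : Expr S} {c₁ c₂ : Cmd S} {te tin tout : ℕ}
    (he : TE S Γ Δ e te tin tout)
    (I1 : MPi Γ c₁) (I2 : MPii Γ c₁ τ) (I3 : MPiii Γ c₁)
    (J1 : MPi Γ c₂) (J2 : MPii Γ c₂ τ) (J3 : MPiii Γ c₂) :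
    MPi Γ (Cmd.ite e c₁ c₂) ∧ MPii Γ (Cmd.ite e c₁ c₂) τ ∧ MPiii Γ (Cmd.ite e c₁ c₂) := by
  obtain ⟨F1, mF1, pF1, hF1⟩ := I1
  obtain ⟨B1, hB1⟩ := I2
  obtain ⟨G1, mG1, pG1, hG1⟩ := I3
  obtain ⟨F2, mF2, pF2, hF2⟩ := J1
  obtain ⟨B2, hB2⟩ := J2
  obtain ⟨G2, mG2, pG2, hG2⟩ := J3
  have hsub1 : varsC c₁ ⊆ varsC (Cmd.ite e c₁ c₂) := by
    intro y hy; simp [varsC, hy]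
  have hsub2 : varsC c₂ ⊆ varsC (Cmd.ite e c₁ c₂) := by
    intro y hy; simp [varsC, hy]
  refine ⟨⟨fun M => F1 M + F2 M + (sizeE e + 1), ?_, ?_, ?_⟩, ⟨max B1 B2, ?_⟩,
    ⟨fun M => G1 M + G2 M, Monotone.add mG1 mG2, pG1.add pG2, ?_⟩⟩
  · exact Monotone.add (Monotone.add mF1 mF2) monotone_const
  · exact (pF1.add pF2).add (PolyBound.const _)
  · intro φ μ μ' n q h
    cases h with
    | @ifT _ _ _ _ _ nb qb hg hb =>
      have e1 : max (Vtier Γ 1 (varsC c₁) μ) (ansL φ qb) ≤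
          max (Vtier Γ 1 (varsC (Cmd.ite e c₁ c₂)) μ) (ansL φ (queriesE S φ μ e ++ qb)) :=
        max_le_max (Vtier_mono_set hsub1) (ansL_append_right _ _)
      have := le_trans (hF1 φ μ μ' nb qb hb) (mF1 e1)
      beta_reduce
      omega
    | @ifF _ _ _ _ _ nb qb hg hb =>
      have e1 : max (Vtier Γ 1 (varsC c₂) μ) (ansL φ qb) ≤
          max (Vtier Γ 1 (varsC (Cmd.ite e c₁ c₂)) μ) (ansL φ (queriesE S φ μ e ++ qb)) :=
        max_le_max (Vtier_mono_set hsub2) (ansL_append_right _ _)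
      have := le_trans (hF2 φ μ μ' nb qb hb) (mF2 e1)
      beta_reduce
      omega
  · intro φ μ μ' n q h z hz
    cases h with
    | ifT hg hb =>
      rcases hB1 φ _ _ _ _ hb z hz with h' | h' | ⟨y, hy, hty, hinf⟩
      · exact Or.inl (by omega)
      · exact Or.inr (Or.inl h')
      · exact Or.inr (Or.inr ⟨y, hsub1 hy, hty, hinf⟩)
    | ifF hg hb =>
      rcases hB2 φ _ _ _ _ hb z hz with h' | h' | ⟨y, hy, hty, hinf⟩
      · exact Or.inl (by omega)
      · exact Or.inr (Or.inl h')
      · exact Or.inr (Or.inr ⟨y, hsub2 hy, hty, hinf⟩)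
  · intro φ μ μ' n q h s
    cases h with
    | @ifT _ _ _ _ _ nb qb hg hb =>
      set X := varsC (Cmd.ite e c₁ c₂) with hX
      set A := ansL φ (queriesE S φ μ e ++ qb) with hA
      have hAb : ansL φ qb ≤ A := ansL_append_right _ _
      refine le_trans (Vtier_eval_lift hb hsub1 s) ?_
      have h3 := hG1 φ μ μ' nb qb hb s
      have e2 : max (Vtier Γ s (varsC c₁) μ) (ansL φ qb) ≤ max (Vtier Γ s X μ) A :=
        max_le_max (Vtier_mono_set hsub1) hAb
      have e3 : max (Vtier Γ (s + 1) (varsC c₁) μ) (ansL φ qb) ≤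
          max (Vtier Γ (s + 1) X μ) A :=
        max_le_max (Vtier_mono_set hsub1) hAb
      have h4 := le_trans h3 (add_le_add e2 (mG1 e3))
      have h5 : Vtier Γ s X μ ≤ max (Vtier Γ s X μ) A := le_max_left _ _
      have h6 : G1 (max (Vtier Γ (s+1) X μ) A) ≤ G1 (max (Vtier Γ (s+1) X μ) A) +
          G2 (max (Vtier Γ (s+1) X μ) A) := by omega
      beta_reduce
      omega
    | @ifF _ _ _ _ _ nb qb hg hb =>
      set X := varsC (Cmd.ite e c₁ c₂) with hX
      set A := ansL φ (queriesE S φ μ e ++ qb) with hA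
      have hAb : ansL φ qb ≤ A := ansL_append_right _ _
      refine le_trans (Vtier_eval_lift hb hsub2 s) ?_
      have h3 := hG2 φ μ μ' nb qb hb s
      have e2 : max (Vtier Γ s (varsC c₂) μ) (ansL φ qb) ≤ max (Vtier Γ s X μ) A :=
        max_le_max (Vtier_mono_set hsub2) hAb
      have e3 : max (Vtier Γ (s + 1) (varsC c₂) μ) (ansL φ qb) ≤
          max (Vtier Γ (s + 1) X μ) A :=
        max_le_max (Vtier_mono_set hsub2) hAb
      have h4 := le_trans h3 (add_le_add e2 (mG2 e3))
      have h5 : Vtier Γ s X μ ≤ max (Vtier Γ s X μ) A := le_max_left _ _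
      beta_reduce
      omega

end MAINCASES

section WHCASE

variable {S : Sig} {Γ : ℕ → ℕ} {Δ : OpEnv S}

theorem MP_wh (hS : SafeDelta S Δ) {e : Expr S} {c : Cmd S} {te tin tout₁ tout₂ : ℕ}
    (he : TE S Γ Δ e te tin tout₁) (hc : TC S Γ Δ c te te tout₂) (hte : 1 ≤ te)
    (I1 : MPi Γ c) (I2 : MPii Γ c te) (I3 : MPiii Γ c) :
    MPi Γ (Cmd.wh e c) ∧ MPii Γ (Cmd.wh e c) te ∧ MPiii Γ (Cmd.wh e c) := by
  classical
  obtain ⟨Fb, mFb, pFb, hFb⟩ := I1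
  obtain ⟨Bb, hBb⟩ := I2
  obtain ⟨Fg, mFg, pFg, hFg⟩ := I3
  set X := varsC (Cmd.wh e c) with hX
  have hsub : varsC c ⊆ X := by intro y hy; rw [hX]; simp [varsC, hy]
  -- the iteration-counting function
  obtain ⟨FN, hFNdef, mFN, pFN⟩ :
      ∃ FN : ℕ → ℕ, (∀ V, FN V = ((allW Bb).card + X.card * (V + 1) ^ 2) ^ X.card) ∧
        Monotone FN ∧ PolyBound FN := by
    refine ⟨_, fun _ => rfl, ?_, ?_⟩
    · intro a b hab
      dsimp only
      refine Nat.pow_le_pow_left ?_ _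
      have h1 : (a + 1) ^ 2 ≤ (b + 1) ^ 2 := Nat.pow_le_pow_left (by omega) _
      have h2 := Nat.mul_le_mul_left X.card h1
      omega
    · refine PolyBound.pow ?_ _
      exact (PolyBound.const _).add ((PolyBound.const _).mul
        ⟨1, 2, fun M => by simp⟩)
  -- the stratified growth functions
  obtain ⟨Frec, hF0, hFS, mFrec, pFrec⟩ :
      ∃ Frec : ℕ → ℕ → ℕ, (∀ m, Frec 0 m = Bb) ∧
        (∀ d m, Frec (d + 1) m = Frec d m + FN m * Fg (m + Frec d m)) ∧
        (∀ d, Monotone (Frec d)) ∧ (∀ d, PolyBound (Frec d)) := by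
    refine ⟨fun d => Nat.rec (motive := fun _ => ℕ → ℕ) (fun _ => Bb)
      (fun _ Fd m => Fd m + FN m * Fg (m + Fd m)) d, fun _ => rfl, fun _ _ => rfl, ?_, ?_⟩
    · intro d
      induction d with
      | zero => exact monotone_const
      | succ d ih =>
        intro a b hab
        have h1 := ih hab
        have h2 := mFN hab
        have h3 := mFg (add_le_add hab (ih hab))
        exact add_le_add h1 (Nat.mul_le_mul h2 h3)
    · intro d
      induction d with
      | zero => exact PolyBound.const Bb
      | succ d ih => exact ih.add (pFN.mul (pFg.comp (PolyBound.id.add ih)))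
  -- the key facts about a decomposed run of the loop
  have KEY : ∀ (φ : W → W) (μ : ℕ → W) (A : ℕ) (N : ℕ) (f : ℕ → ℕ → W)
      (nb : ℕ → ℕ) (qb : ℕ → List W),
      f 0 = μ →
      (∀ i < N, evalE S φ (f i) e = [true] ∧
        EvalC S φ c (f i) (f (i + 1)) (nb i) (qb i) ∧ ansL φ (qb i) ≤ A) →
      evalE S φ (f N) e = [false] →
      ((∀ i ≤ N, ∀ x, te ≤ Γ x → ((f i x).length ≤ Bb ∨ f i x = μ x ∨
          ∃ y ∈ X, Γ x ≤ Γ y ∧ f i x <:+: μ y)) ∧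
        N ≤ FN (Vtier Γ te X μ) ∧
        (∀ d s, te ≤ s + d → ∀ i ≤ N, Vtier Γ s X (f i) ≤
          max (Vtier Γ s X μ) A + Frec d (max (Vtier Γ (s + 1) X μ) A))) := by
    intro φ μ A N f nb qb hf0 hstep hgN
    -- high-tier values stay small or infixes of initial values
    have hA' : ∀ i, i ≤ N → ∀ x, te ≤ Γ x → ((f i x).length ≤ Bb ∨ f i x = μ x ∨
        ∃ y ∈ X, Γ x ≤ Γ y ∧ f i x <:+: μ y) := by
      intro i
      induction i with
      | zero => intro _ x _; rw [hf0]; exact Or.inr (Or.inl rfl)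
      | succ i ih =>
        intro hiN x hx
        obtain ⟨_, hbody, _⟩ := hstep i (by omega)
        rcases hBb φ (f i) (f (i + 1)) (nb i) (qb i) hbody x hx with h' | h' | ⟨y, hy, hty, hinf⟩
        · exact Or.inl h'
        · rw [h']; exact ih (by omega) x hx
        · rcases ih (by omega) y (le_trans hx hty) with h'' | h'' | ⟨y', hy', hty', hinf'⟩
          · exact Or.inl (le_trans hinf.length_le h'')
          · exact Or.inr (Or.inr ⟨y, hsub hy, hty, h'' ▸ hinf⟩)
          · exact Or.inr (Or.inr ⟨y', hy', le_trans hty hty', hinf.trans hinf'⟩)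
    -- variables outside the loop are unchanged
    have hout : ∀ i ≤ N, ∀ z, z ∉ X → f i z = μ z := by
      intro i
      induction i with
      | zero => intro _ z _; rw [hf0]
      | succ i ih =>
        intro hiN z hz
        obtain ⟨_, hbody, _⟩ := hstep i (by omega)
        rw [eval_unchanged hbody (fun hm => hz (hsub hm)), ih (by omega) z hz]
    -- propagation of tier-te equivalence along iterations
    have hprop : ∀ k i j, i < j → j + k ≤ N → storeEquiv Γ te (f i) (f j) →
        storeEquiv Γ te (f (i + k)) (f (j + k)) := by
      intro k
      induction k with
      | zero => intro i j _ _ h; simpa using h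
      | succ k ih =>
        intro i j hij hjk h
        have h1 := ih i j hij (by omega) h
        obtain ⟨_, hb1, _⟩ := hstep (i + k) (by omega)
        obtain ⟨_, hb2, _⟩ := hstep (j + k) (by omega)
        have h2 := noninterf hS φ te (nb (i + k)) hc hb1 hb2 h1
        have e1 : i + (k + 1) = (i + k) + 1 := by omega
        have e2 : j + (k + 1) = (j + k) + 1 := by omega
        rw [e1, e2]
        exact h2
    -- pairwise distinctness of the iteration stores at tier te
    have hdist : ∀ i j, i < j → j ≤ N → ¬ storeEquiv Γ te (f i) (f j) := by
      intro i j hij hjN heq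
      have h1 := hprop (N - j) i j hij (by omega) heq
      have h2 : j + (N - j) = N := by omega
      rw [h2] at h1
      have h3 : evalE S φ (f (i + (N - j))) e = evalE S φ (f N) e := evalE_equiv hS he h1
      have h4 := (hstep (i + (N - j)) (by omega)).1
      rw [hgN, h4] at h3
      simp at h3
    -- the candidate set
    set Xh : Finset ℕ := X.filter (fun x => te ≤ Γ x) with hXh
    set cand : Finset W := allW Bb ∪ Xh.biUnion (fun y => infixesF (μ y)) with hcand
    have hcmem : ∀ i ≤ N, ∀ x ∈ Xh, f i x ∈ cand := by
      intro i hiN x hx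
      obtain ⟨hxX, hxt⟩ := Finset.mem_filter.1 hx
      rcases hA' i hiN x hxt with h' | h' | ⟨y, hy, hty, hinf⟩
      · exact Finset.mem_union_left _ (mem_allW.2 h')
      · refine Finset.mem_union_right _ (Finset.mem_biUnion.2 ⟨x, hx, ?_⟩)
        rw [h']
        exact mem_infixesF.2 (List.infix_refl _)
      · exact Finset.mem_union_right _ (Finset.mem_biUnion.2
          ⟨y, Finset.mem_filter.2 ⟨hy, le_trans hxt hty⟩, mem_infixesF.2 hinf⟩)
    -- the pigeonhole bound on the number of iterations
    have hNbound : N ≤ FN (Vtier Γ te X μ) := by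
      have hginj : Function.Injective (fun (i : Fin (N + 1)) =>
          (fun (x : {z // z ∈ Xh}) =>
            (⟨f i.1 x.1, hcmem i.1 (by omega) x.1 x.2⟩ : {w // w ∈ cand}))) := by
        intro i j hij
        by_contra hne
        have key : ∀ i j : Fin (N + 1), (i : ℕ) < (j : ℕ) →
            (∀ (x : {z // z ∈ Xh}), f i.1 x.1 = f j.1 x.1) → False := by
          intro i j hlt hagree
          refine hdist i.1 j.1 hlt (by omega) ?_
          intro z hz
          by_cases hzX : z ∈ X
          · exact hagree ⟨z, Finset.mem_filter.2 ⟨hzX, hz⟩⟩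
          · rw [hout i.1 (by omega) z hzX, hout j.1 (by omega) z hzX]
        have hagree : ∀ (x : {z // z ∈ Xh}), f i.1 x.1 = f j.1 x.1 := by
          intro x
          have := congrFun hij x
          exact Subtype.ext_iff.1 this
        rcases Nat.lt_trichotomy i.1 j.1 with hlt | heq | hlt
        · exact key i j hlt hagree
        · exact hne (Fin.ext heq)
        · exact key j i hlt (fun x => (hagree x).symm)
      have hcardle := Fintype.card_le_of_injective _ hginj
      rw [Fintype.card_fin] at hcardle
      have hfun : Fintype.card ({z // z ∈ Xh} → {w // w ∈ cand}) = cand.card ^ Xh.card := by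
        rw [Fintype.card_fun, Fintype.card_coe, Fintype.card_coe]
      rw [hfun] at hcardle
      have hcc : cand.card ≤ (allW Bb).card + X.card * (Vtier Γ te X μ + 1) ^ 2 := by
        refine le_trans (Finset.card_union_le _ _) ?_
        have h1 : (Xh.biUnion fun y => infixesF (μ y)).card ≤
            X.card * (Vtier Γ te X μ + 1) ^ 2 := by
          refine le_trans Finset.card_biUnion_le ?_
          have h2 : ∀ y ∈ Xh, (infixesF (μ y)).card ≤ (Vtier Γ te X μ + 1) ^ 2 := by
            intro y hy
            obtain ⟨hyX, hyt⟩ := Finset.mem_filter.1 hy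
            have h3 := card_infixesF_le (μ y)
            have h4 : (μ y).length ≤ Vtier Γ te X μ := le_Vtier hyX hyt
            have h5 : ((μ y).length + 1) * ((μ y).length + 1) ≤
                (Vtier Γ te X μ + 1) * (Vtier Γ te X μ + 1) :=
              Nat.mul_le_mul (by omega) (by omega)
            rw [sq]
            omega
          refine le_trans (Finset.sum_le_card_nsmul Xh _ _ h2) ?_
          have h6 : Xh.card ≤ X.card := Finset.card_filter_le _ _
          simp only [smul_eq_mul]
          exact Nat.mul_le_mul_right _ h6
        omega
      have hb1 : 1 ≤ (allW Bb).card := Finset.card_pos.2 ⟨[], mem_allW.2 (by simp)⟩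
      have hXhc : Xh.card ≤ X.card := Finset.card_filter_le _ _
      have hfinal : N + 1 ≤ ((allW Bb).card + X.card * (Vtier Γ te X μ + 1) ^ 2) ^ X.card := by
        calc N + 1 ≤ cand.card ^ Xh.card := hcardle
        _ ≤ ((allW Bb).card + X.card * (Vtier Γ te X μ + 1) ^ 2) ^ Xh.card :=
            Nat.pow_le_pow_left hcc _
        _ ≤ ((allW Bb).card + X.card * (Vtier Γ te X μ + 1) ^ 2) ^ X.card :=
            Nat.pow_le_pow_right (by omega) hXhc
      rw [hFNdef]
      omega
    refine ⟨hA', hNbound, ?_⟩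
    -- the stratified growth bound
    intro d
    induction d with
    | zero =>
      intro s hs i hiN
      rw [hF0 (max (Vtier Γ (s + 1) X μ) A)]
      refine Vtier_le fun x hx hsx => ?_
      · rcases hA' i hiN x (by omega) with h' | h' | ⟨y, hy, hty, hinf⟩
        · omega
        · have h2 : (μ x).length ≤ Vtier Γ s X μ := le_Vtier hx hsx
          rw [h']
          have := le_max_left (Vtier Γ s X μ) A
          omega
        · have h2 : (f i x).length ≤ (μ y).length := hinf.length_le
          have h3 : (μ y).length ≤ Vtier Γ s X μ := le_Vtier hy (le_trans hsx hty)
          have := le_max_left (Vtier Γ s X μ) A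
          omega
    | succ d ih =>
      intro s hs i hiN
      by_cases hsd : te ≤ s + d
      · have h1 := ih s hsd i hiN
        have h2 := hFS d (max (Vtier Γ (s + 1) X μ) A)
        have h3 : 0 ≤ FN (max (Vtier Γ (s + 1) X μ) A) *
            Fg (max (Vtier Γ (s + 1) X μ) A + Frec d (max (Vtier Γ (s + 1) X μ) A)) :=
          Nat.zero_le _
        omega
      · obtain ⟨m, hm⟩ : ∃ m, m = max (Vtier Γ (s + 1) X μ) A := ⟨_, rfl⟩
        have hup : ∀ i ≤ N, Vtier Γ (s + 1) X (f i) ≤ m + Frec d m := by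
          intro i hiN
          have h1 := ih (s + 1) (by omega) i hiN
          rw [← hm] at h1
          have h2 : Frec d (max (Vtier Γ (s + 1 + 1) X μ) A) ≤ Frec d m :=
            mFrec d (le_trans (max_le_max (Vtier_anti (by omega)) le_rfl) hm.ge)
          omega
        have hstep' : ∀ i < N, Vtier Γ s X (f (i + 1)) ≤
            max (Vtier Γ s X (f i)) A + Fg (m + Frec d m) := by
          intro i hiN
          obtain ⟨_, hbody, hqA⟩ := hstep i hiN
          refine le_trans (Vtier_eval_lift hbody hsub s) ?_
          have h3 := hFg φ (f i) (f (i + 1)) (nb i) (qb i) hbody s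
          have e2 : max (Vtier Γ s (varsC c) (f i)) (ansL φ (qb i)) ≤
              max (Vtier Γ s X (f i)) A :=
            max_le_max (Vtier_mono_set hsub) hqA
          have e3 : max (Vtier Γ (s + 1) (varsC c) (f i)) (ansL φ (qb i)) ≤ m + Frec d m := by
            have h4 := hup i (le_of_lt hiN)
            have h5 : A ≤ m := le_trans (le_max_right _ _) hm.ge
            have h6 : Vtier Γ (s + 1) (varsC c) (f i) ≤ Vtier Γ (s + 1) X (f i) :=
              Vtier_mono_set hsub
            exact max_le (by omega) (by omega)
          have h4 := le_trans h3 (add_le_add e2 (mFg e3))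
          have h5 : Vtier Γ s X (f i) ≤ max (Vtier Γ s X (f i)) A := le_max_left _ _
          omega
        have hacc : ∀ i ≤ N, Vtier Γ s X (f i) ≤
            max (Vtier Γ s X μ) A + i * Fg (m + Frec d m) := by
          intro i
          induction i with
          | zero =>
            intro _
            rw [hf0]
            have := le_max_left (Vtier Γ s X μ) A
            omega
          | succ i ih2 =>
            intro hiN
            have h1 := hstep' i (by omega)
            have h2 := ih2 (by omega)
            have h3 : max (Vtier Γ s X (f i)) A ≤
                max (Vtier Γ s X μ) A + i * Fg (m + Frec d m) := by
              have hA : A ≤ max (Vtier Γ s X μ) A := le_max_right _ _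
              exact max_le (by omega) (by omega)
            have h4 : (i + 1) * Fg (m + Frec d m) = i * Fg (m + Frec d m) +
                Fg (m + Frec d m) := by ring
            omega
        have h6 := hacc i hiN
        have h7 : i * Fg (m + Frec d m) ≤ FN m * Fg (m + Frec d m) := by
          refine Nat.mul_le_mul_right _ ?_
          have h8 : Vtier Γ te X μ ≤ Vtier Γ (s + 1) X μ := Vtier_anti (by omega)
          calc i ≤ N := hiN
          _ ≤ FN (Vtier Γ te X μ) := hNbound
          _ ≤ FN m := mFN (le_trans h8 (le_trans (le_max_left _ _) hm.ge))
        rw [← hm]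
        have h9 := hFS d m
        omega
  -- now the three conclusions
  refine ⟨?_, ?_, ?_⟩
  · -- MPi
    refine ⟨fun M => FN M * (sizeE e + 1 + Fb (M + Frec te M)) +
      (sizeE e + 1 + Fb (M + Frec te M)), ?_, ?_, ?_⟩
    · intro a b hab
      beta_reduce
      have h1 : Fb (a + Frec te a) ≤ Fb (b + Frec te b) :=
        mFb (add_le_add hab (mFrec te hab))
      have h2 := mFN hab
      have h3 := Nat.mul_le_mul h2 (show sizeE e + 1 + Fb (a + Frec te a) ≤
        sizeE e + 1 + Fb (b + Frec te b) by omega)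
      omega
    · exact ((pFN.mul (((PolyBound.const (sizeE e + 1))).add
        (pFb.comp (PolyBound.id.add (pFrec te))))).add
        ((PolyBound.const (sizeE e + 1)).add (pFb.comp (PolyBound.id.add (pFrec te)))))
    · intro φ μ μ' n q hev
      obtain ⟨N, f, nb, qb, hf0, hfN, hstp, hgN, hNn, hsum⟩ := loop_decomp n μ μ' q hev
      set A := ansL φ q with hA
      set M := max (Vtier Γ 1 X μ) A with hM
      have hstep' : ∀ i < N, evalE S φ (f i) e = [true] ∧
          EvalC S φ c (f i) (f (i + 1)) (nb i) (qb i) ∧ ansL φ (qb i) ≤ A :=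
        fun i hi => ⟨(hstp i hi).1, (hstp i hi).2.1, (hstp i hi).2.2.1⟩
      obtain ⟨hA', hNb, hDD⟩ := KEY φ μ A N f nb qb hf0 hstep' hgN
      have hnb : ∀ i < N, nb i ≤ Fb (M + Frec te M) := by
        intro i hi
        refine le_trans (hFb φ (f i) (f (i + 1)) (nb i) (qb i) (hstep' i hi).2.1) (mFb ?_)
        have h2 := hDD te 1 (by omega) i (by omega)
        rw [← hM] at h2
        have h3 : Frec te (max (Vtier Γ (1 + 1) X μ) A) ≤ Frec te M :=
          mFrec te (le_trans (max_le_max (Vtier_anti (by omega)) le_rfl) hM.ge)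
        have h4a : Vtier Γ 1 (varsC c) (f i) ≤ Vtier Γ 1 X (f i) := Vtier_mono_set hsub
        have h4b : ansL φ (qb i) ≤ A := (hstep' i hi).2.2
        have h5 : A ≤ M := le_trans (le_max_right _ _) hM.ge
        exact max_le (by omega) (by omega)
      have hsumle : (∑ i ∈ Finset.range N, (sizeE e + nb i + 1)) ≤
          N * (sizeE e + 1 + Fb (M + Frec te M)) := by
        refine le_trans (Finset.sum_le_card_nsmul _ _ (sizeE e + 1 + Fb (M + Frec te M)) ?_) ?_
        · intro i hi
          have := hnb i (Finset.mem_range.1 hi)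
          omega
        · simp [smul_eq_mul]
      have hNle : N ≤ FN M := le_trans hNb (mFN (le_trans (Vtier_anti hte)
        (le_trans (le_max_left _ _) hM.ge)))
      have h7 : N * (sizeE e + 1 + Fb (M + Frec te M)) ≤
          FN M * (sizeE e + 1 + Fb (M + Frec te M)) := Nat.mul_le_mul_right _ hNle
      beta_reduce
      omega
  · -- MPii
    refine ⟨Bb, ?_⟩
    intro φ μ μ' n q hev x hx
    obtain ⟨N, f, nb, qb, hf0, hfN, hstp, hgN, hNn, hsum⟩ := loop_decomp n μ μ' q hev
    have hstep' : ∀ i < N, evalE S φ (f i) e = [true] ∧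
        EvalC S φ c (f i) (f (i + 1)) (nb i) (qb i) ∧ ansL φ (qb i) ≤ ansL φ q :=
      fun i hi => ⟨(hstp i hi).1, (hstp i hi).2.1, (hstp i hi).2.2.1⟩
    obtain ⟨hA', _, _⟩ := KEY φ μ (ansL φ q) N f nb qb hf0 hstep' hgN
    have := hA' N le_rfl x hx
    rw [hfN] at this
    exact this
  · -- MPiii
    refine ⟨Frec te, mFrec te, pFrec te, ?_⟩
    intro φ μ μ' n q hev s
    obtain ⟨N, f, nb, qb, hf0, hfN, hstp, hgN, hNn, hsum⟩ := loop_decomp n μ μ' q hev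
    have hstep' : ∀ i < N, evalE S φ (f i) e = [true] ∧
        EvalC S φ c (f i) (f (i + 1)) (nb i) (qb i) ∧ ansL φ (qb i) ≤ ansL φ q :=
      fun i hi => ⟨(hstp i hi).1, (hstp i hi).2.1, (hstp i hi).2.2.1⟩
    obtain ⟨_, _, hDD⟩ := KEY φ μ (ansL φ q) N f nb qb hf0 hstep' hgN
    have := hDD te s (by omega) N le_rfl
    rw [hfN] at this
    exact this

end WHCASE





end PSC

section MAINTHM

variable {S : Sig} {Γ : ℕ → ℕ} {Δ : OpEnv S}

/-- The main induction: every typable command satisfies the three invariants. -/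
theorem MP_main (hS : SafeDelta S Δ) {c : Cmd S} {t tin tout : ℕ}
    (h : TC S Γ Δ c t tin tout) :
    MPi Γ c ∧ MPii Γ c (max tin t) ∧ MPiii Γ c := by
  induction h with
  | sub h ih => exact ⟨ih.1, MPii_mono (max_le_max le_rfl (Nat.le_succ _)) ih.2.1, ih.2.2⟩
  | skip => exact ⟨MP_skip.1, MPii_mono (Nat.zero_le _) MP_skip.2.1, MP_skip.2.2⟩
  | assign he hxe => exact MP_assign hS he hxe
  | seq h1 h2 ih1 ih2 =>
    exact MP_seq ih1.1 ih1.2.1 ih1.2.2 ih2.1 ih2.2.1 ih2.2.2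
  | ite he h1 h2 ih1 ih2 =>
    exact MP_ite hS he ih1.1 ih1.2.1 ih1.2.2 ih2.1 ih2.2.1 ih2.2.2
  | whW he hcb h1t h2t ih =>
    obtain ⟨a, b, c'⟩ := MP_wh hS he hcb h1t ih.1 (by simpa using ih.2.1) ih.2.2
    exact ⟨a, MPii_mono (le_max_right _ _) b, c'⟩
  | wh0 he hcb h1t ih =>
    obtain ⟨a, b, c'⟩ := MP_wh hS he hcb h1t ih.1 (by simpa using ih.2.1) ih.2.2
    exact ⟨a, MPii_mono (le_max_right _ _) b, c'⟩

end MAINTHM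

/-- **Polynomial step count corollary.** If a program `p` is in `ST` (safe and
terminating), then `p` has a polynomial step count. -/
theorem polyStepCount_of_ST (S : Sig) (p : Prog S) (hp : p ∈ STset S) :
    p.PolyStepCount := by
  obtain ⟨⟨Γ, Δ, hS, t, tin, tout, htc⟩, -⟩ := hp
  obtain ⟨F, mF, ⟨C, k, hCk⟩, hF⟩ := (MP_main hS htc).1
  refine ⟨Polynomial.C C * (Polynomial.X + 1) ^ k, ?_⟩
  intro φ μ μ' n q hev
  have h1 := hF φ μ μ' n q hev
  have h2 : Vtier Γ 1 (varsC p.cmd) μ ≤ storeSize p μ := by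
    refine Vtier_le fun x hx _ => ?_
    refine Finset.single_le_sum (f := fun x => (μ x).length) (fun _ _ => Nat.zero_le _) ?_
    exact Finset.mem_union_left _ hx
  have h3 : max (Vtier Γ 1 (varsC p.cmd) μ) (ansL φ q) ≤
      max (storeSize p μ) (ansL φ q) := max_le_max h2 le_rfl
  have h7 : mval p φ μ q = max (storeSize p μ) (ansL φ q) := rfl
  have h4 := le_trans h1 (mF (le_trans h3 (le_of_eq h7.symm)))
  have h5 := hCk (mval p φ μ q)
  have h6 : (Polynomial.C C * (Polynomial.X + 1) ^ k : Polynomial ℕ).eval (mval p φ μ q) =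
      C * (mval p φ μ q + 1) ^ k := by simp
  omega

end BFFpaper
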